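/- arXiv:1504.06095 — 5 statements merged into one kernel-verified Lean document; each statement's English description precedes it below -/
import Mathlib

section
/- If p is a prime, then the strong power graph of the cyclic group Z_p is isomorphic to the line graph of the disjoint union of the star K_{1,p-1} and an edge K_2. -/
/-- The strong power graph of a finite group `G`: distinct `a`, `b` are adjacent iff
`a ^ m₁ = b ^ m₂` for some positive integers `m₁, m₂ < |G|`. -/
def strongPowerGraph (G : Type*) [Group G] [Fintype G] : SimpleGraph G where
  Adj a b := a ≠ b ∧ ∃ m₁ m₂ : ℕ, 0 < m₁ ∧ m₁ < Fintype.card G ∧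
      0 < m₂ ∧ m₂ < Fintype.card G ∧ a ^ m₁ = b ^ m₂
  symm := by
    constructor
    rintro a b ⟨hab, m₁, m₂, h₁, h₂, h₃, h₄, h₅⟩
    exact ⟨hab.symm, m₂, m₁, h₃, h₄, h₁, h₂, h₅.symm⟩
  loopless := by constructor; rintro a ⟨h, -⟩; exact h rfl

noncomputable instance strongPowerGraph.decidableRel (G : Type*) [Group G] [Fintype G] :
    DecidableRel (strongPowerGraph G).Adj := fun _ _ => Classical.dec _

/-- The star graph `K_{1,m}` on `Option (Fin m)`: the center `none` is adjacent to every leaf. -/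
def starGraph (m : ℕ) : SimpleGraph (Option (Fin m)) :=
  SimpleGraph.fromRel (fun a b => a = none ∨ b = none)

/-- The disjoint union `K_{1,m} + K₂` on `Option (Fin m) ⊕ Fin 2`. -/
def starPlusEdge (m : ℕ) : SimpleGraph (Option (Fin m) ⊕ Fin 2) where
  Adj x y := match x, y with
    | Sum.inl a, Sum.inl b => (starGraph m).Adj a b
    | Sum.inr a, Sum.inr b => a ≠ b
    | _, _ => False
  symm := by
    constructor
    rintro (a | a) (b | b) h
    · exact (starGraph m).adj_symm h
    · exact h.elim
    · exact h.elim
    · exact fun hba => h hba.symm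
  loopless := by
    constructor
    rintro (a | a) h
    · exact (starGraph m).irrefl h
    · exact h rfl

section aux

/-- `ZMod p ≃ Option (Fin (p-1))`, `0 ↦ none`. -/
def zmodOptEquiv (p : ℕ) [NeZero p] : ZMod p ≃ Option (Fin (p - 1)) where
  toFun a := if h : a = 0 then none else some ⟨a.val - 1, by
    have h1 : a.val ≠ 0 := fun hh => h ((ZMod.val_eq_zero a).mp hh)
    have h2 : a.val < p := ZMod.val_lt a
    omega⟩
  invFun o := o.elim 0 (fun i => ((i.val + 1 : ℕ) : ZMod p))
  left_inv a := by
    by_cases h : a = 0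
    · simp [h]
    · have h1 : a.val ≠ 0 := fun hh => h ((ZMod.val_eq_zero a).mp hh)
      simp only [h, dif_neg, not_false_iff, Option.elim]
      have : a.val - 1 + 1 = a.val := by omega
      rw [this, ZMod.natCast_val, ZMod.cast_id]
  right_inv o := by
    match o with
    | none => simp
    | some i =>
      have hlt : i.val + 1 < p := by have := i.isLt; omega
      have hv : ((i.val + 1 : ℕ) : ZMod p).val = i.val + 1 := ZMod.val_natCast_of_lt hlt
      have hne : ((i.val + 1 : ℕ) : ZMod p) ≠ 0 := by
        intro h; rw [h, ZMod.val_zero] at hv; omega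
      simp only [Option.elim, hne, dif_neg, not_false_iff]
      have hgoal : ((i.val + 1 : ℕ) : ZMod p).val - 1 = i.val := by omega
      exact (dif_neg hne).trans (congrArg some (Fin.ext hgoal))

def edgeOfOpt (m : ℕ) : Option (Fin m) → (starPlusEdge m).edgeSet
  | none => ⟨s(Sum.inr 0, Sum.inr 1), by
      simp only [SimpleGraph.mem_edgeSet]; show (0 : Fin 2) ≠ 1; decide⟩
  | some i => ⟨s(Sum.inl none, Sum.inl (some i)), by
      simp only [SimpleGraph.mem_edgeSet]
      show (starGraph m).Adj none (some i)
      simp [starGraph]⟩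

lemma edgeOfOpt_bijective (m : ℕ) : Function.Bijective (edgeOfOpt m) := by
  constructor
  · rintro (_ | i) (_ | j) h <;> simp [edgeOfOpt, Subtype.ext_iff, Sym2.eq_iff] at h ⊢
    exact h
  · rintro ⟨e, he⟩
    induction e using Sym2.ind with
    | _ x y =>
      rw [SimpleGraph.mem_edgeSet] at he
      match x, y with
      | Sum.inl a, Sum.inl b =>
        have hab : (starGraph m).Adj a b := he
        rw [starGraph, SimpleGraph.fromRel_adj] at hab
        obtain ⟨hne, hor⟩ := hab
        have h : a = none ∨ b = none := by tauto
        rcases h with h | h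
        · subst h
          obtain ⟨i, rfl⟩ := Option.ne_none_iff_exists'.mp (Ne.symm hne)
          exact ⟨some i, rfl⟩
        · subst h
          obtain ⟨i, rfl⟩ := Option.ne_none_iff_exists'.mp hne
          exact ⟨some i, Subtype.ext (Sym2.eq_swap)⟩
      | Sum.inr a, Sum.inr b =>
        have hab : a ≠ b := he
        refine ⟨none, Subtype.ext ?_⟩
        show (s(Sum.inr 0, Sum.inr 1) : Sym2 (Option (Fin m) ⊕ Fin 2)) = s(Sum.inr a, Sum.inr b)
        have hc : (a = 0 ∧ b = 1) ∨ (a = 1 ∧ b = 0) := by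
          fin_cases a <;> fin_cases b <;> simp_all
        rcases hc with ⟨rfl, rfl⟩ | ⟨rfl, rfl⟩
        · rfl
        · exact Sym2.eq_swap

lemma lineAdj (m : ℕ) (x y : Option (Fin m)) :
    (starPlusEdge m).lineGraph.Adj (edgeOfOpt m x) (edgeOfOpt m y) ↔
      x ≠ y ∧ x ≠ none ∧ y ≠ none := by
  rw [SimpleGraph.lineGraph_adj_iff_exists]
  match x, y with
  | none, none => simp
  | none, some j =>
    simp only [edgeOfOpt]
    constructor
    · rintro ⟨-, v, h1, h2⟩
      simp only [Sym2.mem_iff] at h1 h2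
      rcases h1 with rfl | rfl <;> rcases h2 with h | h <;> simp_all
    · rintro ⟨-, h, -⟩; exact absurd rfl h
  | some i, none =>
    simp only [edgeOfOpt]
    constructor
    · rintro ⟨-, v, h1, h2⟩
      simp only [Sym2.mem_iff] at h1 h2
      rcases h2 with rfl | rfl <;> rcases h1 with h | h <;> simp_all
    · rintro ⟨-, -, h⟩; exact absurd rfl h
  | some i, some j =>
    simp only [edgeOfOpt]
    constructor
    · rintro ⟨hne, -⟩
      refine ⟨?_, by simp, by simp⟩
      intro h; apply hne; simp_all
    · rintro ⟨hne, -, -⟩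
      refine ⟨?_, Sum.inl none, by simp, by simp⟩
      simp only [ne_eq, Subtype.mk.injEq, Sym2.eq_iff]
      rintro (⟨-, h⟩ | ⟨h, -⟩) <;> simp_all

lemma strong_adj (p : ℕ) (hp : p.Prime) [NeZero p] (a b : Multiplicative (ZMod p)) :
    (strongPowerGraph (Multiplicative (ZMod p))).Adj a b ↔ a ≠ b ∧ a ≠ 1 ∧ b ≠ 1 := by
  haveI := Fact.mk hp
  have hcard : Fintype.card (Multiplicative (ZMod p)) = p := by
    rw [Fintype.card_multiplicative, ZMod.card]
  have key : ∀ c : Multiplicative (ZMod p), ∀ m : ℕ, 0 < m → m < p → c ≠ 1 → c ^ m ≠ 1 := by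
    intro c m hm1 hm2 hc h
    have : (m : ZMod p) * c.toAdd = 0 := by
      have := congrArg Multiplicative.toAdd h
      rw [toAdd_pow, toAdd_one] at this
      rwa [nsmul_eq_mul] at this
    have hc0 : c.toAdd ≠ 0 := fun h0 => hc (by
      have := congrArg Multiplicative.ofAdd h0; simpa using this)
    have : (m : ZMod p) = 0 := by
      rcases mul_eq_zero.mp this with h | h
      · exact h
      · exact absurd h hc0
    rw [ZMod.natCast_eq_zero_iff] at this
    have := Nat.le_of_dvd hm1 this
    omega
  constructor
  · rintro ⟨hab, m₁, m₂, h₁, h₂, h₃, h₄, h₅⟩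
    rw [hcard] at h₂ h₄
    refine ⟨hab, ?_, ?_⟩
    · intro ha
      have hb1 : b ≠ 1 := fun hb => hab (ha.trans hb.symm)
      apply key b m₂ h₃ h₄ hb1
      rw [← h₅, ha, one_pow]
    · intro hb
      have ha1 : a ≠ 1 := fun ha => hab (ha.trans hb.symm)
      apply key a m₁ h₁ h₂ ha1
      rw [h₅, hb, one_pow]
  · rintro ⟨hab, ha, hb⟩
    refine ⟨hab, 1, (a.toAdd * (b.toAdd)⁻¹).val, one_pos, ?_, ?_, ?_, ?_⟩
    · rw [hcard]; exact hp.one_lt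
    · have ha0 : a.toAdd ≠ 0 := fun h0 => ha (by
        have := congrArg Multiplicative.ofAdd h0; simpa using this)
      have hb0 : b.toAdd ≠ 0 := fun h0 => hb (by
        have := congrArg Multiplicative.ofAdd h0; simpa using this)
      have : a.toAdd * (b.toAdd)⁻¹ ≠ 0 := mul_ne_zero ha0 (inv_ne_zero hb0)
      have := (ZMod.val_eq_zero _).not.mpr this
      omega
    · rw [hcard]; exact ZMod.val_lt _
    · have hb0 : b.toAdd ≠ 0 := fun h0 => hb (by
        have := congrArg Multiplicative.ofAdd h0; simpa using this)
      apply Multiplicative.toAdd.injective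
      rw [toAdd_pow, toAdd_pow, nsmul_eq_mul, nsmul_eq_mul, ZMod.natCast_val, ZMod.cast_id]
      field_simp
      simp

end aux

/-- for a prime `p`, the strong power graph of `ZMod p` (as a multiplicative
group) is isomorphic to the line graph of `K_{1,p-1} + K₂`. -/
theorem strongPowerGraph_zmod_prime_iso (p : ℕ) (hp : p.Prime) :
    haveI : NeZero p := ⟨hp.ne_zero⟩
    Nonempty (strongPowerGraph (Multiplicative (ZMod p)) ≃g (starPlusEdge (p - 1)).lineGraph) := by
  haveI : NeZero p := ⟨hp.ne_zero⟩
  set m := p - 1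
  let e1 : Multiplicative (ZMod p) ≃ ZMod p := Multiplicative.toAdd
  let e2 := zmodOptEquiv p
  let e3 := Equiv.ofBijective _ (edgeOfOpt_bijective m)
  refine ⟨⟨(e1.trans e2).trans e3, ?_⟩⟩
  intro a b
  show (starPlusEdge m).lineGraph.Adj (edgeOfOpt m (e2 a.toAdd)) (edgeOfOpt m (e2 b.toAdd)) ↔ _
  rw [lineAdj, strong_adj p hp]
  have hnone : ∀ c : Multiplicative (ZMod p), e2 c.toAdd = none ↔ c = 1 := by
    intro c
    simp only [e2, zmodOptEquiv, Equiv.coe_fn_mk]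
    constructor
    · intro h
      by_cases hc : c.toAdd = 0
      · have := congrArg Multiplicative.ofAdd hc; simpa using this
      · simp [hc] at h
    · intro h; subst h; simp
  constructor
  · rintro ⟨h1, h2, h3⟩
    exact ⟨fun h => h1 (by rw [h]), (hnone a).not.mp h2, (hnone b).not.mp h3⟩
  · rintro ⟨h1, h2, h3⟩
    refine ⟨?_, (hnone a).not.mpr h2, (hnone b).not.mpr h3⟩
    intro h
    exact h1 (e1.injective (e2.injective h))
end

section
/- For a cyclic group G of order n ≥ 2, the Laplacian of the strong power graph P_s(G) has eigenvalues 0 with multiplicity 1, n with multiplicity n - φ(n) - 1, n - φ(n) - 1 with multiplicity 1, and n - 1 with multiplicity φ(n) - 1. -/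
section Aux
open Matrix
variable {G : Type*} [Group G] [Fintype G] [DecidableEq G]

lemma spg_adj_iff (hG : IsCyclic G) (u v : G) :
    (strongPowerGraph G).Adj u v ↔ u ≠ v ∧ ¬(u = 1 ∧ orderOf v = Fintype.card G)
      ∧ ¬(v = 1 ∧ orderOf u = Fintype.card G) := by
  constructor
  · rintro ⟨huv, m₁, m₂, h₁, h₂, h₃, h₄, h₅⟩
    refine ⟨huv, ?_, ?_⟩
    · rintro ⟨rfl, hv⟩
      rw [one_pow] at h₅
      have : orderOf v ∣ m₂ := orderOf_dvd_of_pow_eq_one h₅.symm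
      rw [hv] at this
      exact absurd (Nat.le_of_dvd h₃ this) (by omega)
    · rintro ⟨rfl, hu⟩
      rw [one_pow] at h₅
      have : orderOf u ∣ m₁ := orderOf_dvd_of_pow_eq_one h₅
      rw [hu] at this
      exact absurd (Nat.le_of_dvd h₁ this) (by omega)
  · rintro ⟨huv, h1, h2⟩
    refine ⟨huv, ?_⟩
    by_cases hu : u = 1
    · subst hu
      have hv1 : v ≠ 1 := fun h => huv h.symm
      have hvord : orderOf v ≠ Fintype.card G := fun h => h1 ⟨rfl, h⟩
      have hlt : orderOf v < Fintype.card G := lt_of_le_of_ne orderOf_le_card_univ hvord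
      have hpos : 0 < orderOf v := orderOf_pos v
      exact ⟨orderOf v, orderOf v, hpos, hlt, hpos, hlt, by simp [pow_orderOf_eq_one]⟩
    by_cases hv : v = 1
    · subst hv
      have huord : orderOf u ≠ Fintype.card G := fun h => h2 ⟨rfl, h⟩
      have hlt : orderOf u < Fintype.card G := lt_of_le_of_ne orderOf_le_card_univ huord
      have hpos : 0 < orderOf u := orderOf_pos u
      exact ⟨orderOf u, orderOf u, hpos, hlt, hpos, hlt, by simp [pow_orderOf_eq_one]⟩
    · obtain ⟨g, hg⟩ := hG.exists_generator
      have hgord : orderOf g = Fintype.card G := by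
        have := orderOf_eq_card_of_forall_mem_zpowers hg
        rwa [Nat.card_eq_fintype_card] at this
      obtain ⟨i, hi⟩ := mem_powers_iff_mem_zpowers.mpr (hg u)
      obtain ⟨j, hj⟩ := mem_powers_iff_mem_zpowers.mpr (hg v)
      have hiu : g ^ i = u := hi
      have hjv : g ^ j = v := hj
      have hcpos : 0 < Fintype.card G := Fintype.card_pos
      have hi' : g ^ (i % Fintype.card G) = u := by rw [← hgord, pow_mod_orderOf]; exact hiu
      have hj' : g ^ (j % Fintype.card G) = v := by rw [← hgord, pow_mod_orderOf]; exact hjv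
      set i' := i % Fintype.card G with hi'd
      set j' := j % Fintype.card G with hj'd
      have hilt : i' < Fintype.card G := Nat.mod_lt _ hcpos
      have hjlt : j' < Fintype.card G := Nat.mod_lt _ hcpos
      have hipos : 0 < i' := by
        rcases Nat.eq_zero_or_pos i' with h | h
        · exfalso; apply hu; rw [← hi', h, pow_zero]
        · exact h
      have hjpos : 0 < j' := by
        rcases Nat.eq_zero_or_pos j' with h | h
        · exfalso; apply hv; rw [← hj', h, pow_zero]
        · exact h
      exact ⟨j', i', hjpos, hjlt, hipos, hilt, by
        rw [← hi', ← hj', ← pow_mul, ← pow_mul, Nat.mul_comm]⟩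


open Finset in
lemma spg_deg_other (hG : IsCyclic G) (u : G) (hu1 : u ≠ 1)
    (hu : orderOf u ≠ Fintype.card G) :
    (strongPowerGraph G).degree u = Fintype.card G - 1 := by
  rw [SimpleGraph.degree]
  have : (strongPowerGraph G).neighborFinset u = univ.erase u := by
    ext v
    simp only [SimpleGraph.mem_neighborFinset, spg_adj_iff hG, mem_erase, mem_univ, and_true]
    constructor
    · rintro ⟨h, -, -⟩; exact h.symm
    · intro h
      exact ⟨fun hh => h hh.symm, fun ⟨h1, _⟩ => hu1 h1, fun ⟨_, h2⟩ => hu h2⟩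
  rw [this, card_erase_of_mem (mem_univ u), card_univ]

open Finset in
lemma spg_deg_gen (hG : IsCyclic G) (hn : 2 ≤ Fintype.card G) (u : G)
    (hu : orderOf u = Fintype.card G) :
    (strongPowerGraph G).degree u = Fintype.card G - 2 := by
  have hu1 : u ≠ 1 := by
    intro h
    rw [h, orderOf_one] at hu
    omega
  rw [SimpleGraph.degree]
  have hne : (strongPowerGraph G).neighborFinset u = (univ.erase u).erase 1 := by
    ext v
    simp only [SimpleGraph.mem_neighborFinset, spg_adj_iff hG, mem_erase, mem_univ, and_true]
    constructor
    · rintro ⟨h, -, h2⟩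
      refine ⟨fun hv => h2 ⟨hv, hu⟩, h.symm⟩
    · rintro ⟨hv1, hvu⟩
      refine ⟨fun hh => hvu hh.symm, ?_, ?_⟩
      · rintro ⟨h1, -⟩; exact hu1 h1
      · rintro ⟨h2, -⟩; exact hv1 h2
  have h1m : (1 : G) ∈ univ.erase u := by
    rw [mem_erase]; exact ⟨hu1.symm, mem_univ 1⟩
  rw [hne, card_erase_of_mem h1m, card_erase_of_mem (mem_univ u), card_univ]
  omega

open Finset in
lemma spg_card_gen (hG : IsCyclic G) :
    (univ.filter fun a : G => orderOf a = Fintype.card G).card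
      = (Fintype.card G).totient := by
  have := hG.card_orderOf_eq_totient (d := Fintype.card G) dvd_rfl
  convert this using 2

open Finset in
lemma spg_deg_one (hG : IsCyclic G) (hn : 2 ≤ Fintype.card G) :
    (strongPowerGraph G).degree (1 : G)
      = Fintype.card G - 1 - (Fintype.card G).totient := by
  rw [SimpleGraph.degree]
  have hne : (strongPowerGraph G).neighborFinset (1 : G)
      = (univ.filter fun v => ¬(v = 1 ∨ orderOf v = Fintype.card G)) := by
    ext v
    rw [SimpleGraph.mem_neighborFinset, spg_adj_iff hG, mem_filter]
    constructor
    · rintro ⟨h, h1, -⟩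
      refine ⟨mem_univ v, ?_⟩
      rintro (rfl | ho)
      · exact h rfl
      · exact h1 ⟨rfl, ho⟩
    · rintro ⟨-, hv⟩
      push_neg at hv
      exact ⟨fun hh => hv.1 hh.symm, fun hp => hv.2 hp.2, fun hp => hv.1 hp.1⟩
  have hsplit := Finset.card_filter_add_card_filter_not
    (s := (univ : Finset G)) (p := fun v => v = 1 ∨ orderOf v = Fintype.card G)
  have hdisj : Disjoint (univ.filter fun v : G => v = 1)
      (univ.filter fun v : G => orderOf v = Fintype.card G) := by
    rw [Finset.disjoint_left]
    intro a ha hb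
    rw [mem_filter] at ha hb
    rw [ha.2, orderOf_one] at hb
    omega
  have hcard : (univ.filter fun v : G => v = 1 ∨ orderOf v = Fintype.card G).card
      = 1 + (Fintype.card G).totient := by
    rw [filter_or, card_union_of_disjoint hdisj, Finset.filter_eq', if_pos (mem_univ 1),
      card_singleton, spg_card_gen hG]
  rw [hne]
  rw [hcard, card_univ] at hsplit
  omega


/-- The rank-`φ+1` factor matrix. -/
noncomputable def spgW (G : Type*) [Group G] [Fintype G] [DecidableEq G] :
    Matrix G (Unit ⊕ {g : G // orderOf g = Fintype.card G}) ℝ :=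
  Matrix.of fun g f =>
    match f with
    | Sum.inl _ => (1 : ℝ)
    | Sum.inr s => (if g = 1 then (1 : ℝ) else 0) - (if g = (s : G) then 1 else 0)

lemma spgW_inl (g : G) (x : Unit) : spgW G g (Sum.inl x) = 1 := rfl

lemma spgW_inr (g : G) (s : {g : G // orderOf g = Fintype.card G}) :
    spgW G g (Sum.inr s)
      = (if g = 1 then (1 : ℝ) else 0) - (if g = (s : G) then 1 else 0) := rfl

open Finset in
lemma spg_sum_ind (w : G) :
    ∑ s : {g : G // orderOf g = Fintype.card G}, (if w = (s : G) then (1 : ℝ) else 0)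
      = if orderOf w = Fintype.card G then 1 else 0 := by
  by_cases hw : orderOf w = Fintype.card G
  · rw [if_pos hw, Finset.sum_eq_single (⟨w, hw⟩ : {g : G // orderOf g = Fintype.card G})]
    · rw [if_pos rfl]
    · intro b _ hb
      rw [if_neg]
      intro h
      exact hb (Subtype.ext h.symm)
    · intro h
      exact absurd (mem_univ _) h
  · rw [if_neg hw, Finset.sum_eq_zero]
    intro s _
    rw [if_neg]
    intro h
    rw [h] at hw
    exact hw s.2

open Finset in
lemma spg_sum_ind2 (w w' : G) :
    ∑ s : {g : G // orderOf g = Fintype.card G},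
        (if w = (s : G) then (1 : ℝ) else 0) * (if w' = (s : G) then 1 else 0)
      = if w = w' then (if orderOf w = Fintype.card G then (1 : ℝ) else 0) else 0 := by
  by_cases h : w = w'
  · subst h
    rw [if_pos rfl, ← spg_sum_ind w]
    apply Finset.sum_congr rfl
    intro s _
    split <;> simp
  · rw [if_neg h, Finset.sum_eq_zero]
    intro s _
    by_cases h1 : w = (s : G)
    · rw [if_pos h1, if_neg (show ¬ w' = (s : G) from fun h2 => h (h1.trans h2.symm)),
        mul_zero]
    · rw [if_neg h1, zero_mul]

open Finset in
lemma spg_card_subtype (hG : IsCyclic G) :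
    Fintype.card {g : G // orderOf g = Fintype.card G} = (Fintype.card G).totient := by
  rw [Fintype.card_subtype]
  exact spg_card_gen hG

open Finset in
lemma spg_WWT (hG : IsCyclic G) (u v : G) :
    (spgW G * (spgW G)ᵀ) u v
      = 1 + ((if u = 1 then (1 : ℝ) else 0) * (if v = 1 then 1 else 0)
            * ((Fintype.card G).totient : ℝ)
          - (if u = 1 then (1 : ℝ) else 0)
            * (if orderOf v = Fintype.card G then 1 else 0)
          - (if v = 1 then (1 : ℝ) else 0)
            * (if orderOf u = Fintype.card G then 1 else 0)
          + (if u = v then (if orderOf u = Fintype.card G then (1 : ℝ) else 0) else 0)) := by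
  rw [Matrix.mul_apply, Fintype.sum_sum_type]
  have h1 : ∑ _ : Unit, spgW G u (Sum.inl ()) * (spgW G)ᵀ (Sum.inl ()) v = 1 := by
    simp [spgW_inl, Matrix.transpose_apply]
  have h2 : ∑ s : {g : G // orderOf g = Fintype.card G},
      spgW G u (Sum.inr s) * (spgW G)ᵀ (Sum.inr s) v
      = (if u = 1 then (1 : ℝ) else 0) * (if v = 1 then 1 else 0)
            * ((Fintype.card G).totient : ℝ)
          - (if u = 1 then (1 : ℝ) else 0)
            * (if orderOf v = Fintype.card G then 1 else 0)
          - (if v = 1 then (1 : ℝ) else 0)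
            * (if orderOf u = Fintype.card G then 1 else 0)
          + (if u = v then (if orderOf u = Fintype.card G then (1 : ℝ) else 0) else 0) := by
    have expand : ∀ s : {g : G // orderOf g = Fintype.card G},
        spgW G u (Sum.inr s) * (spgW G)ᵀ (Sum.inr s) v
        = (if u = 1 then (1 : ℝ) else 0) * (if v = 1 then 1 else 0)
          - (if u = 1 then (1 : ℝ) else 0) * (if v = (s : G) then 1 else 0)
          - (if v = 1 then (1 : ℝ) else 0) * (if u = (s : G) then 1 else 0)
          + (if u = (s : G) then (1 : ℝ) else 0) * (if v = (s : G) then 1 else 0) := by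
      intro s
      rw [Matrix.transpose_apply, spgW_inr, spgW_inr]
      ring
    rw [Finset.sum_congr rfl (fun s _ => expand s)]
    rw [Finset.sum_add_distrib, Finset.sum_sub_distrib, Finset.sum_sub_distrib]
    rw [Finset.sum_const, ← Finset.mul_sum, ← Finset.mul_sum, spg_sum_ind, spg_sum_ind,
      spg_sum_ind2, card_univ, spg_card_subtype hG]
    push_cast
    ring
  rw [h1, h2]

open Finset in
lemma spg_lap_eq (hG : IsCyclic G) (hn : 2 ≤ Fintype.card G) :
    (strongPowerGraph G).lapMatrix ℝ
      = (Fintype.card G : ℝ) • 1 - spgW G * (spgW G)ᵀ := by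
  have h1n : orderOf (1 : G) = 1 := orderOf_one
  have hn1 : ¬ orderOf (1 : G) = Fintype.card G := by omega
  have hφlt : (Fintype.card G).totient < Fintype.card G := Nat.totient_lt _ (by omega)
  have hone : ¬ (1 = Fintype.card G) := by omega
  ext u v
  rw [SimpleGraph.lapMatrix, Matrix.sub_apply, Matrix.sub_apply, Matrix.smul_apply,
    Matrix.one_apply, SimpleGraph.degMatrix, Matrix.diagonal_apply,
    SimpleGraph.adjMatrix_apply, spg_WWT hG, smul_eq_mul]
  by_cases huv : u = v
  · subst huv
    rw [if_pos rfl, if_neg ((strongPowerGraph G).irrefl)]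
    by_cases hu1 : u = 1
    · subst hu1
      rw [spg_deg_one hG hn]
      have hc : ((Fintype.card G - 1 - (Fintype.card G).totient : ℕ) : ℝ)
          = (Fintype.card G : ℝ) - 1 - ((Fintype.card G).totient : ℝ) := by
        have h1 : (1:ℕ) ≤ Fintype.card G := by omega
        have h2 : (Fintype.card G).totient ≤ Fintype.card G - 1 := by omega
        push_cast [Nat.cast_sub h1, Nat.cast_sub h2]
        ring
      rw [hc]
      simp [hn1, hone]
      ring
    · by_cases huo : orderOf u = Fintype.card G
      · rw [spg_deg_gen hG hn u huo]
        have hc : ((Fintype.card G - 2 : ℕ) : ℝ) = (Fintype.card G : ℝ) - 2 := by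
          push_cast [Nat.cast_sub hn]
          ring
        rw [hc]
        simp [hu1, huo, hone]
        ring
      · rw [spg_deg_other hG u hu1 huo]
        have hc : ((Fintype.card G - 1 : ℕ) : ℝ) = (Fintype.card G : ℝ) - 1 := by
          push_cast [Nat.cast_sub (show (1:ℕ) ≤ Fintype.card G by omega)]
          ring
        rw [hc]
        simp [hu1, huo, hone]
  · rw [if_neg huv, if_neg huv]
    by_cases hu1 : u = 1
    · subst hu1
      have hv1 : ¬ v = 1 := fun h => huv h.symm
      by_cases hvo : orderOf v = Fintype.card G
      · have hA : ¬ (strongPowerGraph G).Adj 1 v :=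
          fun hadj => ((spg_adj_iff hG 1 v).mp hadj).2.1 ⟨rfl, hvo⟩
        simp [hA, hv1, hvo, hn1, hone]
      · have hA : (strongPowerGraph G).Adj 1 v := (spg_adj_iff hG 1 v).mpr
          ⟨huv, fun hp => hvo hp.2, fun hp => hv1 hp.1⟩
        simp [hA, hv1, hvo, hn1, hone]
    · by_cases hv1 : v = 1
      · subst hv1
        by_cases huo : orderOf u = Fintype.card G
        · have hA : ¬ (strongPowerGraph G).Adj u 1 :=
            fun hadj => ((spg_adj_iff hG u 1).mp hadj).2.2 ⟨rfl, huo⟩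
          simp [hA, hu1, huo, hn1, hone]
        · have hA : (strongPowerGraph G).Adj u 1 := (spg_adj_iff hG u 1).mpr
            ⟨huv, fun hp => hu1 hp.1, fun hp => huo hp.2⟩
          simp [hA, hu1, huo, hn1, hone]
      · have hA : (strongPowerGraph G).Adj u v := (spg_adj_iff hG u v).mpr
          ⟨huv, fun hp => hu1 hp.1, fun hp => hv1 hp.1⟩
        simp [hA, hu1, hv1, huv, hone]


open Finset in
lemma spg_blocks (hn : 2 ≤ Fintype.card G) (c : ℝ) :
    (1 : Matrix (Unit ⊕ {g : G // orderOf g = Fintype.card G})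
        (Unit ⊕ {g : G // orderOf g = Fintype.card G}) ℝ) + (spgW G)ᵀ * (c • spgW G)
      = Matrix.fromBlocks (Matrix.of fun _ _ : Unit => 1 + c * (Fintype.card G : ℝ)) 0 0
          ((1 + c) • (1 : Matrix {g : G // orderOf g = Fintype.card G}
              {g : G // orderOf g = Fintype.card G} ℝ)
            + Matrix.of (fun _ _ => c)) := by
  ext i j
  rcases i with i | s <;> rcases j with j | t
  · rw [Matrix.add_apply, Matrix.mul_apply, Matrix.fromBlocks_apply₁₁, Matrix.one_apply_eq]
    simp only [Matrix.transpose_apply, Matrix.smul_apply, spgW_inl, smul_eq_mul, mul_one]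
    rw [Finset.sum_const, card_univ, nsmul_eq_mul, Matrix.of_apply]
    ring
  · rw [Matrix.add_apply, Matrix.mul_apply, Matrix.fromBlocks_apply₁₂,
      Matrix.one_apply_ne (by simp), Matrix.zero_apply, zero_add]
    have hterm : ∀ g : G, (spgW G)ᵀ (Sum.inl i) g * (c • spgW G) g (Sum.inr t)
        = c * ((if g = 1 then (1:ℝ) else 0) - (if g = (t : G) then 1 else 0)) := by
      intro g
      simp only [Matrix.transpose_apply, Matrix.smul_apply, spgW_inl, spgW_inr, smul_eq_mul]
      ring
    rw [Finset.sum_congr rfl fun g _ => hterm g, ← Finset.mul_sum, Finset.sum_sub_distrib]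
    rw [Finset.sum_ite_eq' univ (1 : G) (fun _ => (1:ℝ)),
      Finset.sum_ite_eq' univ ((t : G)) (fun _ => (1:ℝ))]
    simp
  · rw [Matrix.add_apply, Matrix.mul_apply, Matrix.fromBlocks_apply₂₁,
      Matrix.one_apply_ne (by simp), Matrix.zero_apply, zero_add]
    have hterm : ∀ g : G, (spgW G)ᵀ (Sum.inr s) g * (c • spgW G) g (Sum.inl j)
        = c * ((if g = 1 then (1:ℝ) else 0) - (if g = (s : G) then 1 else 0)) := by
      intro g
      simp only [Matrix.transpose_apply, Matrix.smul_apply, spgW_inl, spgW_inr, smul_eq_mul]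
      ring
    rw [Finset.sum_congr rfl fun g _ => hterm g, ← Finset.mul_sum, Finset.sum_sub_distrib]
    rw [Finset.sum_ite_eq' univ (1 : G) (fun _ => (1:ℝ)),
      Finset.sum_ite_eq' univ ((s : G)) (fun _ => (1:ℝ))]
    simp
  · rw [Matrix.add_apply, Matrix.mul_apply, Matrix.fromBlocks_apply₂₂]
    have hs1 : (s : G) ≠ 1 := by
      intro h; have h2 := s.2; rw [h, orderOf_one] at h2; omega
    have ht1 : (t : G) ≠ 1 := by
      intro h; have h2 := t.2; rw [h, orderOf_one] at h2; omega
    have hmul : ∀ (x y g : G), (if g = x then (1:ℝ) else 0) * (if g = y then 1 else 0)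
        = if g = x then (if x = y then (1:ℝ) else 0) else 0 := by
      intro x y g
      by_cases h1 : g = x
      · subst h1; simp
      · simp [h1]
    have hterm : ∀ g : G, (spgW G)ᵀ (Sum.inr s) g * (c • spgW G) g (Sum.inr t)
        = c * (((if g = 1 then (1:ℝ) else 0) * (if g = 1 then (1:ℝ) else 0)
          - (if g = 1 then (1:ℝ) else 0) * (if g = (t:G) then 1 else 0))
          - ((if g = (s:G) then (1:ℝ) else 0) * (if g = 1 then 1 else 0)
          - (if g = (s:G) then (1:ℝ) else 0) * (if g = (t:G) then 1 else 0))) := by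
      intro g
      simp only [Matrix.transpose_apply, Matrix.smul_apply, spgW_inr, smul_eq_mul]
      ring
    rw [Finset.sum_congr rfl fun g _ => hterm g, ← Finset.mul_sum, Finset.sum_sub_distrib,
      Finset.sum_sub_distrib, Finset.sum_sub_distrib]
    simp only [hmul]
    rw [Finset.sum_ite_eq' univ (1 : G), Finset.sum_ite_eq' univ (1 : G),
      Finset.sum_ite_eq' univ ((s : G)), Finset.sum_ite_eq' univ ((s : G))]
    have h1s : (1:G) ≠ (s:G) := fun h => hs1 h.symm
    have h1t : (1:G) ≠ (t:G) := fun h => ht1 h.symm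
    by_cases hst : s = t
    · subst hst
      simp [hs1, h1s]
      ring
    · have hst' : ¬ (s:G) = (t:G) := fun h => hst (Subtype.coe_inj.mp h)
      simp [hs1, hst, hst', h1t]


open Finset in
lemma spg_det (hG : IsCyclic G) (hn : 2 ≤ Fintype.card G) (x : ℝ)
    (hx1 : x ≠ (Fintype.card G : ℝ)) (hx2 : x ≠ (Fintype.card G : ℝ) - 1) :
    (x • (1 : Matrix G G ℝ) - (strongPowerGraph G).lapMatrix ℝ).det
      = (x - 0) * (x - (Fintype.card G : ℝ)) ^ (Fintype.card G - (Fintype.card G).totient - 1)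
        * (x - ((Fintype.card G : ℝ) - ((Fintype.card G).totient : ℝ) - 1))
        * (x - ((Fintype.card G : ℝ) - 1)) ^ ((Fintype.card G).totient - 1) := by
  have hφpos : 1 ≤ (Fintype.card G).totient := Nat.totient_pos.mpr (by omega)
  have hφlt : (Fintype.card G).totient < Fintype.card G := Nat.totient_lt _ (by omega)
  set nR : ℝ := (Fintype.card G : ℝ) with hnR
  have hxn : x - nR ≠ 0 := sub_ne_zero.mpr hx1
  have hy : x - (nR - 1) ≠ 0 := sub_ne_zero.mpr hx2
  set c : ℝ := (x - nR)⁻¹ with hc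
  have h1c : (1 : ℝ) + c ≠ 0 := by
    intro h
    have hcm : c = -1 := by linarith
    rw [hc] at hcm
    have h2' : x - nR = -1 := by
      have := congrArg Inv.inv hcm
      rwa [inv_inv, show ((-1:ℝ))⁻¹ = -1 by norm_num] at this
    apply hx2
    linarith
  have h2 : x • (1 : Matrix G G ℝ) - (strongPowerGraph G).lapMatrix ℝ
      = (x - nR) • ((1 : Matrix G G ℝ) + (c • spgW G) * (spgW G)ᵀ) := by
    rw [spg_lap_eq hG hn, Matrix.smul_mul, smul_add, smul_smul, mul_inv_cancel₀ hxn, one_smul,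
      sub_smul]
    abel
  rw [h2, Matrix.det_smul, Matrix.det_one_add_mul_comm]
  have h3 : (1 : Matrix (Unit ⊕ {g : G // orderOf g = Fintype.card G}) _ ℝ)
      + (spgW G)ᵀ * (c • spgW G) = Matrix.fromBlocks
        (Matrix.of fun _ _ : Unit => 1 + c * nR) 0 0
        ((1 + c) • (1 : Matrix {g : G // orderOf g = Fintype.card G}
            {g : G // orderOf g = Fintype.card G} ℝ)
          + Matrix.of (fun _ _ => c)) := spg_blocks hn c
  rw [h3, Matrix.det_fromBlocks_zero₂₁]
  have h4 : ((1 + c) • (1 : Matrix {g : G // orderOf g = Fintype.card G}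
          {g : G // orderOf g = Fintype.card G} ℝ) + Matrix.of (fun _ _ => c))
      = (1 + c) • ((1 : Matrix {g : G // orderOf g = Fintype.card G}
          {g : G // orderOf g = Fintype.card G} ℝ)
        + Matrix.replicateCol Unit (fun _ : {g : G // orderOf g = Fintype.card G} => c / (1 + c))
          * Matrix.replicateRow Unit (fun _ : {g : G // orderOf g = Fintype.card G} => (1:ℝ))) := by
    rw [smul_add]
    congr 1
    ext s t
    rw [Matrix.smul_apply, Matrix.mul_apply, Matrix.of_apply]
    simp only [Matrix.replicateCol_apply, Matrix.replicateRow_apply, Finset.sum_const, card_univ,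
      Fintype.card_unit, one_smul, mul_one, smul_eq_mul]
    rw [show ((1:ℝ)+c) * (c/(1+c)) = c from by rw [mul_comm]; exact div_mul_cancel₀ c h1c]
  rw [h4, Matrix.det_smul, Matrix.det_one_add_replicateCol_mul_replicateRow, Matrix.det_unique]
  rw [spg_card_subtype hG]
  simp only [Matrix.of_apply, dotProduct, Finset.sum_const, card_univ, spg_card_subtype hG,
    nsmul_eq_mul, mul_one, one_mul]
  rw [show (x - nR) ^ Fintype.card G
      = (x - nR) ^ (Fintype.card G - (Fintype.card G).totient - 1)
        * (x - nR) ^ ((Fintype.card G).totient - 1) * (x - nR) ^ 2 by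
    rw [← pow_add, ← pow_add]
    congr 1
    omega]
  have hxc : (x - nR) * c = 1 := mul_inv_cancel₀ hxn
  have hdiv : ((1:ℝ)+c) * (c/(1+c)) = c := by
    rw [mul_comm]
    exact div_mul_cancel₀ c h1c
  have hfac : (x - nR) * (1 + c) = x - (nR - 1) := by linear_combination hxc
  have epow : ((1:ℝ) + c) ^ ((Fintype.card G).totient)
      = (1 + c) ^ ((Fintype.card G).totient - 1) * (1 + c) := by
    rw [← pow_succ]
    congr 1
    omega
  have e1 : (x - nR) ^ ((Fintype.card G).totient - 1)
      * (1 + c) ^ ((Fintype.card G).totient - 1)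
      = (x - (nR - 1)) ^ ((Fintype.card G).totient - 1) := by
    rw [← mul_pow, hfac]
  have hb : (x - nR) * (1 + c * nR) = x := by linear_combination nR * hxc
  have hd : (x - nR) * ((1 + c) + ((Fintype.card G).totient : ℝ) * c)
      = x - nR + 1 + ((Fintype.card G).totient : ℝ) := by
    linear_combination (1 + ((Fintype.card G).totient : ℝ)) * hxc
  have e2 : (x - nR) ^ 2 * ((1 + c * nR) * ((1 + c)
        * (1 + ((Fintype.card G).totient : ℝ) * (c / (1 + c)))))
      = (x - 0) * (x - (nR - ((Fintype.card G).totient : ℝ) - 1)) := by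
    calc (x - nR) ^ 2 * ((1 + c * nR) * ((1 + c)
          * (1 + ((Fintype.card G).totient : ℝ) * (c / (1 + c)))))
        = ((x - nR) * (1 + c * nR)) * ((x - nR) * ((1 + c)
            + ((Fintype.card G).totient : ℝ) * (((1:ℝ)+c) * (c/(1+c))))) := by ring
      _ = ((x - nR) * (1 + c * nR)) * ((x - nR) * ((1 + c)
            + ((Fintype.card G).totient : ℝ) * c)) := by rw [hdiv]
      _ = x * (x - nR + 1 + ((Fintype.card G).totient : ℝ)) := by rw [hb, hd]
      _ = (x - 0) * (x - (nR - ((Fintype.card G).totient : ℝ) - 1)) := by ring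
  have hmain : (x - nR) ^ (Fintype.card G - (Fintype.card G).totient - 1)
        * (x - nR) ^ ((Fintype.card G).totient - 1) * (x - nR) ^ 2
        * ((1 + c * nR) * ((1 + c) ^ ((Fintype.card G).totient)
          * (1 + ((Fintype.card G).totient : ℝ) * (c / (1 + c)))))
      = (x - 0) * (x - nR) ^ (Fintype.card G - (Fintype.card G).totient - 1)
        * (x - (nR - ((Fintype.card G).totient : ℝ) - 1))
        * (x - (nR - 1)) ^ ((Fintype.card G).totient - 1) := by
    rw [epow]
    calc (x - nR) ^ (Fintype.card G - (Fintype.card G).totient - 1)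
        * (x - nR) ^ ((Fintype.card G).totient - 1) * (x - nR) ^ 2
        * ((1 + c * nR) * ((1 + c) ^ ((Fintype.card G).totient - 1) * (1 + c)
          * (1 + ((Fintype.card G).totient : ℝ) * (c / (1 + c)))))
        = ((x - nR) ^ ((Fintype.card G).totient - 1)
            * (1 + c) ^ ((Fintype.card G).totient - 1))
          * ((x - nR) ^ (Fintype.card G - (Fintype.card G).totient - 1)
            * ((x - nR) ^ 2 * ((1 + c * nR) * ((1 + c)
              * (1 + ((Fintype.card G).totient : ℝ) * (c / (1 + c))))))) := by ring
      _ = _ := by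
        rw [e1, e2]
        ring
  linear_combination hmain


open Polynomial in
lemma spg_eval_charpoly (M : Matrix G G ℝ) (x : ℝ) :
    M.charpoly.eval x = (x • (1 : Matrix G G ℝ) - M).det := by
  rw [Matrix.charpoly, ← Polynomial.coe_evalRingHom, RingHom.map_det]
  congr 1
  ext i j
  by_cases h : i = j
  · subst h
    simp [Matrix.charmatrix_apply_eq, Matrix.one_apply_eq]
  · simp [Matrix.charmatrix_apply_ne _ _ _ h, Matrix.one_apply_ne h]

end Aux


open Polynomial in
/-- for a cyclic group `G` of order `n ≥ 2`, the Laplacian eigenvalues of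
`P_s(G)` (with algebraic multiplicity) are `0` once, `n` with multiplicity `n - φ(n) - 1`,
`n - φ(n) - 1` once, and `n - 1` with multiplicity `φ(n) - 1`. -/
theorem strongPowerGraph_lapMatrix_spectrum_cyclic (G : Type*) [Group G] [Fintype G]
    [DecidableEq G] (hG : IsCyclic G) (n : ℕ) (hcard : Fintype.card G = n) (hn : 2 ≤ n) :
    ((strongPowerGraph G).lapMatrix ℝ).charpoly.roots =
      {(0 : ℝ)} + Multiset.replicate (n - Nat.totient n - 1) (n : ℝ) +
        {((n : ℝ) - Nat.totient n - 1)} +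
        Multiset.replicate (Nat.totient n - 1) ((n : ℝ) - 1) := by
  subst hcard
  set m : Multiset ℝ := {(0 : ℝ)}
      + Multiset.replicate (Fintype.card G - Nat.totient (Fintype.card G) - 1)
          ((Fintype.card G : ℕ) : ℝ)
      + {((Fintype.card G : ℝ) - Nat.totient (Fintype.card G) - 1)}
      + Multiset.replicate (Nat.totient (Fintype.card G) - 1) ((Fintype.card G : ℝ) - 1)
    with hm
  have key : ((strongPowerGraph G).lapMatrix ℝ).charpoly
      = (m.map fun a => X - C a).prod := by
    apply Polynomial.eq_of_infinite_eval_eq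
    have hfin : ({(Fintype.card G : ℝ), (Fintype.card G : ℝ) - 1} : Set ℝ).Finite :=
      Set.toFinite _
    have hinf : ({(Fintype.card G : ℝ), (Fintype.card G : ℝ) - 1} : Set ℝ)ᶜ.Infinite :=
      Set.Finite.infinite_compl hfin
    apply hinf.mono
    intro x hx
    simp only [Set.mem_compl_iff, Set.mem_insert_iff, Set.mem_singleton_iff, not_or] at hx
    obtain ⟨hx1, hx2⟩ := hx
    simp only [Set.mem_setOf_eq]
    rw [spg_eval_charpoly, spg_det hG hn x hx1 hx2]
    rw [Polynomial.eval_multiset_prod, Multiset.map_map]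
    simp only [Function.comp_apply, Polynomial.eval_sub, Polynomial.eval_X, Polynomial.eval_C]
    rw [hm]
    simp only [Multiset.map_add, Multiset.map_singleton, Multiset.map_replicate,
      Multiset.prod_add, Multiset.prod_singleton, Multiset.prod_replicate]
    try ring
  rw [key, Polynomial.roots_multiset_prod_X_sub_C]
end

section
/- Let Γ be a graph on m + n + 1 vertices such that m + n of the vertices form a clique and the remaining vertex v is adjacent to exactly n of the clique vertices (and there are no other edges). Then the permanent of the adjacency matrix of Γ equals n · Σ_{r=1}^{m+n} (-1)^{r-1} (m+n-r)! [ C(m+n-1, r-1) + (n-1) · C(m+n-2, r-1) ]. -/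
open Finset Equiv Function

private lemma card_fixp {α : Type*} [Fintype α] [DecidableEq α] (p : α → Prop) [DecidablePred p] :
    (univ.filter fun τ : Perm α => (∀ x, ¬ p x → τ x = x) ∧ ∀ x, p x → τ x ≠ x).card
      = numDerangements (Fintype.card (Subtype p)) := by
  rw [← Fintype.card_subtype, ← card_derangements_eq_numDerangements (Subtype p)]
  refine Fintype.card_congr ?_
  refine (Equiv.subtypeEquivRight ?_).trans (derangements.subtypeEquiv p).symm
  intro f
  constructor
  · rintro ⟨h1, h2⟩ a
    exact ⟨fun h => h1 a h, fun hf hp => h2 a hp hf⟩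
  · intro h
    exact ⟨fun a ha => (h a).1 ha, fun a hp hf => (h a).2 hf hp⟩

private lemma sum_core (j : ℕ) :
    ∑ s ∈ range (j + 1), (-1 : ℤ) ^ s * (Nat.factorial (j - s) : ℤ) * (Nat.choose j s : ℤ)
      = numDerangements j := by
  rw [numDerangements_sum]
  refine Finset.sum_congr rfl fun s hs => ?_
  rw [Finset.mem_range] at hs
  have hsj : s ≤ j := Nat.lt_succ_iff.mp hs
  have : Nat.ascFactorial (s + 1) (j - s) = Nat.factorial (j - s) * Nat.choose j s := by
    rw [Nat.ascFactorial_eq_factorial_mul_choose, Nat.add_sub_cancel' hsj, Nat.choose_symm hsj]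
  rw [this]
  push_cast
  ring

private lemma sum_A (j : ℕ) :
    ∑ r ∈ Icc 1 (j + 1), (-1 : ℤ) ^ (r - 1) * (Nat.factorial (j + 1 - r) : ℤ)
        * (Nat.choose j (r - 1) : ℤ) = numDerangements j := by
  rw [← Finset.Ico_add_one_right_eq_Icc, Finset.sum_Ico_eq_sum_range, ← sum_core j]
  refine Finset.sum_congr (by congr 1) fun s _ => ?_
  have e1 : 1 + s - 1 = s := by omega
  have e2 : j + 1 - (1 + s) = j - s := by omega
  rw [e1, e2]

private lemma sum_B (j : ℕ) :
    ∑ r ∈ Icc 1 (j + 2), (-1 : ℤ) ^ (r - 1) * (Nat.factorial (j + 2 - r) : ℤ)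
        * (Nat.choose j (r - 1) : ℤ)
      = numDerangements (j + 1) + numDerangements j := by
  have hB : ∑ r ∈ Icc 1 (j + 2), (-1 : ℤ) ^ (r - 1) * (Nat.factorial (j + 2 - r) : ℤ)
        * (Nat.choose j (r - 1) : ℤ)
      = ∑ s ∈ range (j + 2), (-1 : ℤ) ^ s * (Nat.factorial (j + 1 - s) : ℤ)
        * (Nat.choose j s : ℤ) := by
    rw [← Finset.Ico_add_one_right_eq_Icc, Finset.sum_Ico_eq_sum_range]
    refine Finset.sum_congr (by congr 1) fun s _ => ?_
    have e1 : 1 + s - 1 = s := by omega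
    have e2 : j + 2 - (1 + s) = j + 1 - s := by omega
    rw [e1, e2]
  rw [hB]
  have hA : ∑ s ∈ range (j + 2), (-1 : ℤ) ^ s * (Nat.factorial (j + 1 - s) : ℤ)
        * (Nat.choose (j + 1) s : ℤ) = numDerangements (j + 1) := sum_core (j + 1)
  have hC := sum_core j
  have hdiff : ∑ s ∈ range (j + 2), ((-1 : ℤ) ^ s * (Nat.factorial (j + 1 - s) : ℤ)
          * (Nat.choose (j + 1) s : ℤ)
        - (-1 : ℤ) ^ s * (Nat.factorial (j + 1 - s) : ℤ) * (Nat.choose j s : ℤ))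
      = - ∑ s ∈ range (j + 1), (-1 : ℤ) ^ s * (Nat.factorial (j - s) : ℤ)
          * (Nat.choose j s : ℤ) := by
    rw [Finset.sum_range_succ']
    simp only [Nat.choose_zero_right, Nat.cast_one, pow_zero, one_mul, sub_self, add_zero]
    rw [← Finset.sum_neg_distrib]
    refine Finset.sum_congr rfl fun t ht => ?_
    have : Nat.choose (j + 1) (t + 1) = Nat.choose j t + Nat.choose j (t + 1) :=
      Nat.choose_succ_succ _ _
    rw [this]
    have h2 : j + 1 - (t + 1) = j - t := by omega
    rw [h2]
    push_cast
    ring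
  rw [Finset.sum_sub_distrib, hA, hC] at hdiff
  linarith

private lemma count_main {V : Type*} [Fintype V] [DecidableEq V]
    (Γ : SimpleGraph V) [DecidableRel Γ.Adj] (k n : ℕ) (v : V)
    (hcard : Fintype.card V = k + 1)
    (hclique : ∀ a b : V, a ≠ v → b ≠ v → a ≠ b → Γ.Adj a b)
    (hdeg : Γ.degree v = n) :
    (univ.filter fun σ : Perm V => ∀ i, Γ.Adj (σ i) i).card
      = n * numDerangements (k - 1)
        + n * (n - 1) * (numDerangements (k - 1) + numDerangements (k - 2)) := by
  classical
  set S := Γ.neighborFinset v with hSdef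
  have hS : S.card = n := hdeg
  have hbv : ∀ b, b ∈ S → b ≠ v := by
    intro b hb
    rw [hSdef, SimpleGraph.mem_neighborFinset] at hb
    exact hb.ne'
  have hmem : ∀ σ : Perm V, (∀ i, Γ.Adj (σ i) i)
      ↔ ((∀ i, σ i ≠ i) ∧ σ.symm v ∈ S ∧ σ v ∈ S) := by
    intro σ
    constructor
    · intro h
      refine ⟨fun i => (h i).ne, ?_, ?_⟩
      · rw [hSdef, SimpleGraph.mem_neighborFinset]
        have h2 := h (σ.symm v)
        rwa [Equiv.apply_symm_apply] at h2
      · rw [hSdef, SimpleGraph.mem_neighborFinset]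
        exact (h v).symm
    · rintro ⟨hder, ha, hb⟩ i
      rw [hSdef, SimpleGraph.mem_neighborFinset] at ha hb
      by_cases hiv : i = v
      · subst hiv; exact hb.symm
      · by_cases hsv : σ i = v
        · have hi : σ.symm v = i := by rw [← hsv, Equiv.symm_apply_apply]
          rw [hsv]; rw [hi] at ha; exact ha
        · exact hclique _ _ hsv hiv (hder i)
  set D := univ.filter (fun σ : Perm V => ∀ i, Γ.Adj (σ i) i) with hDdef
  have hfib : D.card = ∑ p ∈ S ×ˢ S, (D.filter fun σ => (σ.symm v, σ v) = p).card := by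
    refine Finset.card_eq_sum_card_fiberwise fun σ hσ => ?_
    rw [Finset.mem_coe, hDdef, Finset.mem_filter] at hσ
    have h := (hmem σ).mp hσ.2
    exact Finset.mem_coe.mpr (Finset.mem_product.mpr ⟨h.2.1, h.2.2⟩)
  -- case 1 : diagonal fibers
  have case1 : ∀ a ∈ S, (D.filter fun σ => (σ.symm v, σ v) = (a, a)).card
      = numDerangements (k - 1) := by
    intro a haS
    have hav : a ≠ v := hbv a haS
    have hsub : Fintype.card {x : V // x ≠ v ∧ x ≠ a} = k - 1 := by
      rw [Fintype.card_subtype]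
      have he : (univ.filter fun x : V => x ≠ v ∧ x ≠ a) = (univ.erase v).erase a := by
        ext x
        simp only [Finset.mem_filter, Finset.mem_erase, Finset.mem_univ, and_true, true_and]
        tauto
      rw [he, Finset.card_erase_of_mem (Finset.mem_erase.mpr ⟨hav, Finset.mem_univ a⟩),
        Finset.card_erase_of_mem (Finset.mem_univ v), Finset.card_univ, hcard]
      omega
    rw [← hsub, ← card_fixp (fun x : V => x ≠ v ∧ x ≠ a)]
    refine Finset.card_bij' (fun σ _ => σ * Equiv.swap v a) (fun τ _ => τ * Equiv.swap v a)
      ?_ ?_ ?_ ?_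
    · intro σ hσ
      rw [Finset.mem_filter] at hσ
      obtain ⟨hσD, hpair⟩ := hσ
      rw [Prod.mk.injEq] at hpair
      obtain ⟨hs, hv'⟩ := hpair
      rw [hDdef, Finset.mem_filter] at hσD
      have hder := fun i => (hσD.2 i).ne
      have hσa : σ a = v := by rw [← hs, Equiv.apply_symm_apply]
      rw [Finset.mem_filter]
      refine ⟨Finset.mem_univ _, ?_, ?_⟩
      · intro x hx
        push_neg at hx
        by_cases hxv : x = v
        · subst hxv
          simp [Perm.mul_apply, Equiv.swap_apply_left, hσa]
        · have hxa : x = a := hx hxv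
          subst hxa
          simp [Perm.mul_apply, Equiv.swap_apply_right, hv']
      · intro x hx
        rw [Perm.mul_apply, Equiv.swap_apply_of_ne_of_ne hx.1 hx.2]
        exact hder x
    · intro τ hτ
      rw [Finset.mem_filter] at hτ
      obtain ⟨-, h1, h2⟩ := hτ
      have hτv : τ v = v := h1 v (by simp)
      have hτa : τ a = a := h1 a (by simp)
      rw [Finset.mem_filter]
      have hσv : (τ * Equiv.swap v a) v = a := by
        rw [Perm.mul_apply, Equiv.swap_apply_left, hτa]
      have hσa : (τ * Equiv.swap v a) a = v := by
        rw [Perm.mul_apply, Equiv.swap_apply_right, hτv]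
      have hσs : (τ * Equiv.swap v a).symm v = a := by
        rw [Equiv.symm_apply_eq, hσa]
      refine ⟨?_, by rw [hσs, hσv]⟩
      rw [hDdef, Finset.mem_filter]
      refine ⟨Finset.mem_univ _, (hmem _).mpr ⟨?_, by rw [hσs]; exact haS, by rw [hσv]; exact haS⟩⟩
      intro i
      by_cases hiv : i = v
      · subst hiv; rw [hσv]; exact hav
      · by_cases hia : i = a
        · subst hia; rw [hσa]; exact fun h => hav h.symm
        · rw [Perm.mul_apply, Equiv.swap_apply_of_ne_of_ne hiv hia]
          exact h2 i ⟨hiv, hia⟩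
    · intro σ _
      show σ * Equiv.swap v a * Equiv.swap v a = σ
      rw [mul_assoc, Equiv.swap_mul_self, mul_one]
    · intro τ _
      show τ * Equiv.swap v a * Equiv.swap v a = τ
      rw [mul_assoc, Equiv.swap_mul_self, mul_one]
  -- case 2 : off-diagonal fibers
  have case2 : ∀ a ∈ S, ∀ b ∈ S, b ≠ a →
      (D.filter fun σ => (σ.symm v, σ v) = (a, b)).card
        = numDerangements (k - 1) + numDerangements (k - 2) := by
    intro a haS b hbS hba
    have hav : a ≠ v := hbv a haS
    have hbv' : b ≠ v := hbv b hbS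
    set G := univ.filter (fun τ : Perm V => τ v = v ∧ τ a = b ∧ ∀ x, x ≠ v → τ x ≠ x)
      with hGdef
    have step1 : (D.filter fun σ => (σ.symm v, σ v) = (a, b)).card = G.card := by
      refine Finset.card_bij' (fun σ _ => σ * Equiv.swap v a) (fun τ _ => τ * Equiv.swap v a)
        ?_ ?_ ?_ ?_
      · intro σ hσ
        rw [Finset.mem_filter] at hσ
        obtain ⟨hσD, hpair⟩ := hσ
        rw [Prod.mk.injEq] at hpair
        obtain ⟨hs, hv'⟩ := hpair
        rw [hDdef, Finset.mem_filter] at hσD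
        have hder := fun i => (hσD.2 i).ne
        have hσa : σ a = v := by rw [← hs, Equiv.apply_symm_apply]
        rw [hGdef, Finset.mem_filter]
        refine ⟨Finset.mem_univ _, ?_, ?_, ?_⟩
        · show σ (Equiv.swap v a v) = v
          rw [Equiv.swap_apply_left, hσa]
        · show σ (Equiv.swap v a a) = b
          rw [Equiv.swap_apply_right, hv']
        · intro x hxv
          by_cases hxa : x = a
          · rw [hxa]
            show σ (Equiv.swap v a a) ≠ a
            rw [Equiv.swap_apply_right, hv']
            exact hba
          · show σ (Equiv.swap v a x) ≠ x
            rw [Equiv.swap_apply_of_ne_of_ne hxv hxa]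
            exact hder x
      · intro τ hτ
        rw [hGdef, Finset.mem_filter] at hτ
        obtain ⟨-, hτv, hτa, hτd⟩ := hτ
        have hσv : (τ * Equiv.swap v a) v = b := by
          rw [Perm.mul_apply, Equiv.swap_apply_left, hτa]
        have hσa : (τ * Equiv.swap v a) a = v := by
          rw [Perm.mul_apply, Equiv.swap_apply_right, hτv]
        have hσs : (τ * Equiv.swap v a).symm v = a := by
          rw [Equiv.symm_apply_eq, hσa]
        rw [Finset.mem_filter]
        refine ⟨?_, by rw [hσs, hσv]⟩
        rw [hDdef, Finset.mem_filter]
        refine ⟨Finset.mem_univ _,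
          (hmem _).mpr ⟨?_, by rw [hσs]; exact haS, by rw [hσv]; exact hbS⟩⟩
        intro i
        by_cases hiv : i = v
        · rw [hiv, hσv]; exact hbv'
        · by_cases hia : i = a
          · rw [hia, hσa]; exact hav.symm
          · rw [Perm.mul_apply, Equiv.swap_apply_of_ne_of_ne hiv hia]
            exact hτd i hiv
      · intro σ _
        show σ * Equiv.swap v a * Equiv.swap v a = σ
        rw [mul_assoc, Equiv.swap_mul_self, mul_one]
      · intro τ _
        show τ * Equiv.swap v a * Equiv.swap v a = τ
        rw [mul_assoc, Equiv.swap_mul_self, mul_one]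
    have hsub2 : Fintype.card {x : V // x ≠ v ∧ x ≠ a ∧ x ≠ b} = k - 2 := by
      rw [Fintype.card_subtype]
      have he : (univ.filter fun x : V => x ≠ v ∧ x ≠ a ∧ x ≠ b)
          = ((univ.erase v).erase a).erase b := by
        ext x
        simp only [Finset.mem_filter, Finset.mem_erase, Finset.mem_univ, and_true, true_and]
        tauto
      rw [he, Finset.card_erase_of_mem (by simp [hba, hbv']),
        Finset.card_erase_of_mem (by simp [hav]),
        Finset.card_erase_of_mem (Finset.mem_univ v), Finset.card_univ, hcard]
      omega
    have hsub1 : Fintype.card {x : V // x ≠ v ∧ x ≠ a} = k - 1 := by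
      rw [Fintype.card_subtype]
      have he : (univ.filter fun x : V => x ≠ v ∧ x ≠ a) = (univ.erase v).erase a := by
        ext x
        simp only [Finset.mem_filter, Finset.mem_erase, Finset.mem_univ, and_true, true_and]
        tauto
      rw [he, Finset.card_erase_of_mem (Finset.mem_erase.mpr ⟨hav, Finset.mem_univ a⟩),
        Finset.card_erase_of_mem (Finset.mem_univ v), Finset.card_univ, hcard]
      omega
    have split : G.card
        = (G.filter fun τ => τ b = a).card + (G.filter fun τ => ¬ τ b = a).card :=
      (Finset.card_filter_add_card_filter_not (s := G) (fun τ : Perm V => τ b = a)).symm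
    have step3 : (G.filter fun τ => τ b = a).card = numDerangements (k - 2) := by
      rw [← hsub2, ← card_fixp (fun x : V => x ≠ v ∧ x ≠ a ∧ x ≠ b)]
      refine Finset.card_bij' (fun τ _ => τ * Equiv.swap a b) (fun ρ _ => ρ * Equiv.swap a b)
        ?_ ?_ ?_ ?_
      · intro τ hτ
        rw [Finset.mem_filter] at hτ
        obtain ⟨hτG, hτb⟩ := hτ
        rw [hGdef, Finset.mem_filter] at hτG
        obtain ⟨-, hτv, hτa, hτd⟩ := hτG
        rw [Finset.mem_filter]
        refine ⟨Finset.mem_univ _, ?_, ?_⟩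
        · intro x hx
          push_neg at hx
          by_cases hxv : x = v
          · rw [hxv]
            show τ (Equiv.swap a b v) = v
            rw [Equiv.swap_apply_of_ne_of_ne hav.symm hbv'.symm, hτv]
          · by_cases hxa : x = a
            · rw [hxa]
              show τ (Equiv.swap a b a) = a
              rw [Equiv.swap_apply_left]
              exact hτb
            · have hxb : x = b := hx hxv hxa
              rw [hxb]
              show τ (Equiv.swap a b b) = b
              rw [Equiv.swap_apply_right]
              exact hτa
        · intro x hx
          show τ (Equiv.swap a b x) ≠ x
          rw [Equiv.swap_apply_of_ne_of_ne hx.2.1 hx.2.2]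
          exact hτd x hx.1
      · intro ρ hρ
        rw [Finset.mem_filter] at hρ
        obtain ⟨-, h1, h2⟩ := hρ
        have hρv : ρ v = v := h1 v (by simp)
        have hρa : ρ a = a := h1 a (by simp)
        have hρb : ρ b = b := h1 b (by simp)
        have e1 : (ρ * Equiv.swap a b) a = b := by
          rw [Perm.mul_apply, Equiv.swap_apply_left, hρb]
        have e2 : (ρ * Equiv.swap a b) b = a := by
          rw [Perm.mul_apply, Equiv.swap_apply_right, hρa]
        have e3 : (ρ * Equiv.swap a b) v = v := by
          rw [Perm.mul_apply, Equiv.swap_apply_of_ne_of_ne hav.symm hbv'.symm, hρv]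
        rw [Finset.mem_filter]
        refine ⟨?_, e2⟩
        rw [hGdef, Finset.mem_filter]
        refine ⟨Finset.mem_univ _, e3, e1, ?_⟩
        intro x hxv
        by_cases hxa : x = a
        · rw [hxa, e1]; exact hba
        · by_cases hxb : x = b
          · rw [hxb, e2]; exact hba.symm
          · show ρ (Equiv.swap a b x) ≠ x
            rw [Equiv.swap_apply_of_ne_of_ne hxa hxb]
            exact h2 x ⟨hxv, hxa, hxb⟩
      · intro τ _
        show τ * Equiv.swap a b * Equiv.swap a b = τ
        rw [mul_assoc, Equiv.swap_mul_self, mul_one]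
      · intro ρ _
        show ρ * Equiv.swap a b * Equiv.swap a b = ρ
        rw [mul_assoc, Equiv.swap_mul_self, mul_one]
    have step4 : (G.filter fun τ => ¬ τ b = a).card = numDerangements (k - 1) := by
      rw [← hsub1, ← card_fixp (fun x : V => x ≠ v ∧ x ≠ a)]
      refine Finset.card_bij' (fun τ _ => Equiv.swap a b * τ) (fun ρ _ => Equiv.swap a b * ρ)
        ?_ ?_ ?_ ?_
      · intro τ hτ
        rw [Finset.mem_filter] at hτ
        obtain ⟨hτG, hτb⟩ := hτ
        rw [hGdef, Finset.mem_filter] at hτG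
        obtain ⟨-, hτv, hτa, hτd⟩ := hτG
        rw [Finset.mem_filter]
        refine ⟨Finset.mem_univ _, ?_, ?_⟩
        · intro x hx
          push_neg at hx
          by_cases hxv : x = v
          · rw [hxv]
            show Equiv.swap a b (τ v) = v
            rw [hτv, Equiv.swap_apply_of_ne_of_ne hav.symm hbv'.symm]
          · rw [hx hxv]
            show Equiv.swap a b (τ a) = a
            rw [hτa, Equiv.swap_apply_right]
        · intro x hx
          show Equiv.swap a b (τ x) ≠ x
          by_cases hxb : x = b
          · rw [hxb]
            rw [Equiv.swap_apply_of_ne_of_ne hτb (hτd b hbv')]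
            exact hτd b hbv'
          · intro hcon
            have h3 : τ x = Equiv.swap a b x := by
              have h4 := congrArg (Equiv.swap a b) hcon
              rwa [Equiv.swap_apply_self] at h4
            rw [Equiv.swap_apply_of_ne_of_ne hx.2 hxb] at h3
            exact hτd x hx.1 h3
      · intro ρ hρ
        rw [Finset.mem_filter] at hρ
        obtain ⟨-, h1, h2⟩ := hρ
        have hρv : ρ v = v := h1 v (by simp)
        have hρa : ρ a = a := h1 a (by simp)
        have hρbb : ρ b ≠ b := h2 b ⟨hbv', hba⟩
        have hρba : ρ b ≠ a := fun h => hba (ρ.injective (h.trans hρa.symm))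
        have e1 : (Equiv.swap a b * ρ) v = v := by
          rw [Perm.mul_apply, hρv, Equiv.swap_apply_of_ne_of_ne hav.symm hbv'.symm]
        have e2 : (Equiv.swap a b * ρ) a = b := by
          rw [Perm.mul_apply, hρa, Equiv.swap_apply_left]
        have e3 : (Equiv.swap a b * ρ) b = ρ b := by
          rw [Perm.mul_apply, Equiv.swap_apply_of_ne_of_ne hρba hρbb]
        rw [Finset.mem_filter]
        refine ⟨?_, by rw [e3]; exact hρba⟩
        rw [hGdef, Finset.mem_filter]
        refine ⟨Finset.mem_univ _, e1, e2, ?_⟩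
        intro x hxv
        by_cases hxa : x = a
        · rw [hxa, e2]; exact hba
        · by_cases hxb : x = b
          · rw [hxb, e3]; exact hρbb
          · show Equiv.swap a b (ρ x) ≠ x
            intro hcon
            have h3 : ρ x = Equiv.swap a b x := by
              have h4 := congrArg (Equiv.swap a b) hcon
              rwa [Equiv.swap_apply_self] at h4
            rw [Equiv.swap_apply_of_ne_of_ne hxa hxb] at h3
            exact h2 x ⟨hxv, hxa⟩ h3
      · intro τ _
        show Equiv.swap a b * (Equiv.swap a b * τ) = τ
        rw [← mul_assoc, Equiv.swap_mul_self, one_mul]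
      · intro ρ _
        show Equiv.swap a b * (Equiv.swap a b * ρ) = ρ
        rw [← mul_assoc, Equiv.swap_mul_self, one_mul]
    rw [step1, split, step3, step4, Nat.add_comm]
  -- assemble
  have inner : ∀ a ∈ S, ∑ b ∈ S, (D.filter fun σ => (σ.symm v, σ v) = (a, b)).card
      = numDerangements (k - 1)
        + (n - 1) * (numDerangements (k - 1) + numDerangements (k - 2)) := by
    intro a ha
    rw [← Finset.add_sum_erase _ _ ha, case1 a ha]
    congr 1
    rw [Finset.sum_congr rfl
        (fun b hb => case2 a ha b (Finset.mem_of_mem_erase hb) (Finset.ne_of_mem_erase hb)),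
      Finset.sum_const, smul_eq_mul, Finset.card_erase_of_mem ha, hS]
  calc D.card = ∑ p ∈ S ×ˢ S, (D.filter fun σ => (σ.symm v, σ v) = p).card := hfib
    _ = ∑ a ∈ S, ∑ b ∈ S, (D.filter fun σ => (σ.symm v, σ v) = (a, b)).card :=
        Finset.sum_product _ _ _
    _ = ∑ _a ∈ S, (numDerangements (k - 1)
        + (n - 1) * (numDerangements (k - 1) + numDerangements (k - 2))) :=
        Finset.sum_congr rfl inner
    _ = n * numDerangements (k - 1)
        + n * (n - 1) * (numDerangements (k - 1) + numDerangements (k - 2)) := by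
        rw [Finset.sum_const, smul_eq_mul, hS, Nat.mul_add, Nat.mul_assoc]

/-- let `Γ` be a graph on `m + n + 1` vertices such that the vertices other
than a distinguished vertex `v` form a clique of size `m + n`, and `v` is adjacent to exactly
`n` of them.  Then the permanent of the adjacency matrix of `Γ` is
`n · Σ_{r=1}^{m+n} (-1)^{r-1} (m+n-r)! (C(m+n-1, r-1) + (n-1) C(m+n-2, r-1))`. -/
theorem permanent_adjMatrix_clique_plus_vertex {V : Type*} [Fintype V] [DecidableEq V]
    (Γ : SimpleGraph V) [DecidableRel Γ.Adj] (m n : ℕ) (v : V)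
    (hcard : Fintype.card V = m + n + 1)
    (hclique : ∀ a b : V, a ≠ v → b ≠ v → a ≠ b → Γ.Adj a b)
    (hdeg : Γ.degree v = n) :
    (Γ.adjMatrix ℤ).permanent =
      (n : ℤ) * ∑ r ∈ Icc 1 (m + n), (-1 : ℤ) ^ (r - 1) * (Nat.factorial (m + n - r) : ℤ) *
        ((Nat.choose (m + n - 1) (r - 1) : ℤ) +
          ((n : ℤ) - 1) * (Nat.choose (m + n - 2) (r - 1) : ℤ)) := by
  classical
  have hper : (Γ.adjMatrix ℤ).permanent
      = ((univ.filter fun σ : Perm V => ∀ i, Γ.Adj (σ i) i).card : ℤ) := by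
    rw [Matrix.permanent, Finset.card_filter]
    push_cast
    refine Finset.sum_congr rfl fun σ _ => ?_
    simp only [SimpleGraph.adjMatrix_apply, Finset.prod_boole]
    congr 1
    simp
  rw [hper, count_main Γ (m + n) n v hcard hclique hdeg]
  have hnk : n ≤ m + n := Nat.le_add_left n m
  -- now a purely arithmetic identity
  rcases Nat.eq_zero_or_pos n with hn0 | hn1
  · subst hn0
    simp
  rcases Nat.lt_or_ge n 2 with hn2 | hn2
  · -- n = 1
    have hn : n = 1 := by omega
    subst hn
    obtain ⟨j, hj⟩ : ∃ j, m + 1 = j + 1 := ⟨m, rfl⟩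
    rw [hj]
    have e0 : 1 * numDerangements (j + 1 - 1)
        + 1 * (1 - 1) * (numDerangements (j + 1 - 1) + numDerangements (j + 1 - 2))
        = numDerangements j := by simp
    rw [e0, ← sum_A j]
    norm_num [Nat.add_sub_cancel]
  · -- n ≥ 2, so m + n ≥ 2
    obtain ⟨j, hj⟩ : ∃ j, m + n = j + 2 := ⟨m + n - 2, by omega⟩
    rw [hj]
    have e1 : j + 2 - 1 = j + 1 := by omega
    have e2 : j + 2 - 2 = j := by omega
    rw [e1, e2]
    have hsplit : ∑ r ∈ Icc 1 (j + 2), (-1 : ℤ) ^ (r - 1) * (Nat.factorial (j + 2 - r) : ℤ) *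
          ((Nat.choose (j + 1) (r - 1) : ℤ) + ((n : ℤ) - 1) * (Nat.choose j (r - 1) : ℤ))
        = (∑ r ∈ Icc 1 (j + 2), (-1 : ℤ) ^ (r - 1) * (Nat.factorial (j + 2 - r) : ℤ) *
            (Nat.choose (j + 1) (r - 1) : ℤ))
          + ((n : ℤ) - 1) * ∑ r ∈ Icc 1 (j + 2), (-1 : ℤ) ^ (r - 1) *
            (Nat.factorial (j + 2 - r) : ℤ) * (Nat.choose j (r - 1) : ℤ) := by
      rw [Finset.mul_sum, ← Finset.sum_add_distrib]
      refine Finset.sum_congr rfl fun r _ => ?_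
      ring
    rw [hsplit, sum_B j]
    have hA : ∑ r ∈ Icc 1 (j + 2), (-1 : ℤ) ^ (r - 1) * (Nat.factorial (j + 2 - r) : ℤ) *
        (Nat.choose (j + 1) (r - 1) : ℤ) = numDerangements (j + 1) := sum_A (j + 1)
    rw [hA]
    have hn1' : (1 : ℕ) ≤ n := by omega
    push_cast [Nat.cast_sub hn1']
    ring
end

section
/- If G is a cyclic group of order n ≥ 2, then the permanent of the adjacency matrix of the strong power graph P_s(G) equals (n - φ(n) - 1) · Σ_{r=1}^{n-1} (-1)^{r-1} (n-1-r)! [ C(n-2, r-1) + (n - 2 - φ(n)) · C(n-3, r-1) ]. -/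
open Finset

section AuxSums

private lemma sumA (m : ℕ) :
    ∑ j ∈ range (m + 1), (-1 : ℤ) ^ j * ((m - j).factorial : ℤ) * (m.choose j : ℤ)
      = numDerangements m := by
  rw [numDerangements_sum]
  refine Finset.sum_congr rfl fun j hj => ?_
  have hj' : j ≤ m := by simpa [Nat.lt_succ_iff] using hj
  have key : (m - j).factorial * m.choose j = (j + 1).ascFactorial (m - j) := by
    apply Nat.eq_of_mul_eq_mul_left (Nat.factorial_pos j)
    rw [Nat.factorial_mul_ascFactorial j (m - j), Nat.add_sub_cancel' hj',
      ← Nat.choose_mul_factorial_mul_factorial hj']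
    ring
  rw [mul_assoc, ← Nat.cast_mul, key]

private lemma sumB (t : ℕ) :
    ∑ j ∈ range (t + 2), (-1 : ℤ) ^ j * ((t + 1 - j).factorial : ℤ) * (t.choose j : ℤ)
      = (numDerangements (t + 1) : ℤ) + (numDerangements t : ℤ) := by
  have hsplit : ∀ j ∈ range (t + 2),
      (-1:ℤ)^j * ((t+1-j).factorial : ℤ) * (t.choose j : ℤ)
        = (-1:ℤ)^j * ((t+1-j).factorial : ℤ) * (((t+1).choose j : ℤ))
          - (-1:ℤ)^j * ((t+1-j).factorial : ℤ) * (((t+1).choose j : ℤ) - (t.choose j : ℤ)) := by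
    intro j _; ring
  rw [Finset.sum_congr rfl hsplit, Finset.sum_sub_distrib, sumA (t+1)]
  have h2 : ∑ j ∈ range (t + 2),
      (-1:ℤ)^j * ((t+1-j).factorial : ℤ) * (((t+1).choose j : ℤ) - (t.choose j : ℤ))
      = -(numDerangements t : ℤ) := by
    rw [Finset.sum_range_succ']
    have h0 : (-1:ℤ)^0 * ((t+1-0).factorial : ℤ) * (((t+1).choose 0 : ℤ) - (t.choose 0 : ℤ))
        = 0 := by simp
    rw [h0, add_zero]
    have hterm : ∀ i ∈ range (t+1),
        (-1:ℤ)^(i+1) * ((t+1-(i+1)).factorial:ℤ) *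
            (((t+1).choose (i+1):ℤ) - (t.choose (i+1):ℤ))
          = -((-1:ℤ)^i * ((t - i).factorial:ℤ) * (t.choose i : ℤ)) := by
      intro i _
      have e1 : t + 1 - (i+1) = t - i := by omega
      have e2 : (t+1).choose (i+1) = t.choose i + t.choose (i+1) := Nat.choose_succ_succ t i
      rw [e1, e2]; push_cast; ring
    rw [Finset.sum_congr rfl hterm, Finset.sum_neg_distrib, sumA t]
  rw [h2]; ring

private lemma rhsSum (t : ℕ) (c : ℤ) :
    ∑ r ∈ Icc 1 (t + 2), (-1:ℤ)^(r-1) * ((t + 2 - r).factorial : ℤ) *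
        (((t+1).choose (r-1) : ℤ) + c * (t.choose (r-1) : ℤ))
      = (numDerangements (t+1) : ℤ)
          + c * ((numDerangements (t+1) : ℤ) + (numDerangements t : ℤ)) := by
  have hIcc : Icc 1 (t+2) = Ico 1 (t+2+1) := (Finset.Ico_add_one_right_eq_Icc 1 (t+2))
  rw [hIcc, Finset.sum_Ico_eq_sum_range]
  have hrange : t + 2 + 1 - 1 = t + 2 := rfl
  rw [hrange]
  have hterm : ∀ i ∈ range (t+2),
      (-1:ℤ)^(1+i-1) * ((t+2-(1+i)).factorial : ℤ) *
          (((t+1).choose (1+i-1):ℤ) + c*(t.choose (1+i-1):ℤ))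
        = ((-1:ℤ)^i * ((t+1-i).factorial : ℤ) * ((t+1).choose i : ℤ))
            + c * ((-1:ℤ)^i * ((t+1-i).factorial : ℤ) * (t.choose i : ℤ)) := by
    intro i _
    have e1 : 1 + i - 1 = i := by omega
    have e2 : t + 2 - (1+i) = t+1-i := by omega
    rw [e1, e2]; ring
  rw [Finset.sum_congr rfl hterm, Finset.sum_add_distrib, ← Finset.mul_sum, sumA (t+1), sumB t]

end AuxSums

section AuxCards

open Equiv Equiv.Perm Function

variable {α : Type*} [Fintype α] [DecidableEq α]

private lemma card_subtype_ne_ne {e a : α} (hea : e ≠ a) :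
    Fintype.card {x : α // x ≠ e ∧ x ≠ a} = Fintype.card α - 2 := by
  rw [Fintype.card_subtype]
  have h : (univ.filter fun x : α => x ≠ e ∧ x ≠ a) = (univ.erase e).erase a := by
    ext x
    simp only [mem_filter, mem_univ, true_and, mem_erase]
    tauto
  rw [h, Finset.card_erase_of_mem (Finset.mem_erase.2 ⟨hea.symm, mem_univ a⟩),
    Finset.card_erase_of_mem (mem_univ e), Finset.card_univ]
  omega

private lemma cardL1 {e a : α} (hea : e ≠ a) :
    Fintype.card {σ : Perm α // (∀ x, σ x ≠ x) ∧ σ e = a ∧ σ a = e}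
      = numDerangements (Fintype.card α - 2) := by
  classical
  rw [← card_subtype_ne_ne hea, ← card_derangements_eq_numDerangements]
  refine Fintype.card_congr ?_
  have keyiff : ∀ (σ : Perm α), σ e = a → σ a = e →
      ∀ x : α, (x ≠ e ∧ x ≠ a) ↔ (σ x ≠ e ∧ σ x ≠ a) := by
    intro σ he ha x
    have k1 : σ x = e ↔ x = a := by rw [← ha, EmbeddingLike.apply_eq_iff_eq]
    have k2 : σ x = a ↔ x = e := by rw [← he, EmbeddingLike.apply_eq_iff_eq]
    constructor
    · rintro ⟨h1, h2⟩; exact ⟨fun h => h2 (k1.mp h), fun h => h1 (k2.mp h)⟩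
    · rintro ⟨h1, h2⟩; exact ⟨fun h => h2 (k2.mpr h), fun h => h1 (k1.mpr h)⟩
  refine
    { toFun := fun σp =>
        ⟨(σp.1).subtypePerm (fun x => (keyiff σp.1 σp.2.2.1 σp.2.2.2 x).symm),
          fun x hx => σp.2.1 x.1 (congrArg Subtype.val hx)⟩
      invFun := fun dp => ⟨Equiv.Perm.ofSubtype dp.1 * Equiv.swap e a, ?_, ?_, ?_⟩
      left_inv := ?_
      right_inv := ?_ }
  · -- derangement property of inverse image
    intro x
    rcases eq_or_ne x e with rfl | hxe
    · rw [Perm.mul_apply, Equiv.swap_apply_left,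
        Equiv.Perm.ofSubtype_apply_of_not_mem dp.1 (by simp)]
      exact hea.symm
    rcases eq_or_ne x a with rfl | hxa
    · rw [Perm.mul_apply, Equiv.swap_apply_right,
        Equiv.Perm.ofSubtype_apply_of_not_mem dp.1 (by simp)]
      exact hea
    · rw [Perm.mul_apply, Equiv.swap_apply_of_ne_of_ne hxe hxa,
        Equiv.Perm.ofSubtype_apply_of_mem dp.1 ⟨hxe, hxa⟩]
      intro h
      exact dp.2 ⟨x, hxe, hxa⟩ (Subtype.ext h)
  · -- σ' e = a
    rw [Perm.mul_apply, Equiv.swap_apply_left,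
      Equiv.Perm.ofSubtype_apply_of_not_mem dp.1 (by simp)]
  · -- σ' a = e
    rw [Perm.mul_apply, Equiv.swap_apply_right,
      Equiv.Perm.ofSubtype_apply_of_not_mem dp.1 (by simp)]
  · -- left inverse
    rintro ⟨σ, hd, h1, h2⟩
    apply Subtype.ext
    apply Equiv.ext
    intro x
    rcases eq_or_ne x e with rfl | hxe
    · rw [Perm.mul_apply, Equiv.swap_apply_left,
        Equiv.Perm.ofSubtype_apply_of_not_mem _ (by simp), h1]
    rcases eq_or_ne x a with rfl | hxa
    · rw [Perm.mul_apply, Equiv.swap_apply_right,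
        Equiv.Perm.ofSubtype_apply_of_not_mem _ (by simp), h2]
    · rw [Perm.mul_apply, Equiv.swap_apply_of_ne_of_ne hxe hxa,
        Equiv.Perm.ofSubtype_apply_of_mem _ ⟨hxe, hxa⟩]
      rfl
  · -- right inverse
    rintro ⟨d, hd⟩
    apply Subtype.ext
    apply Equiv.ext
    rintro ⟨x, hx⟩
    apply Subtype.ext
    show (Equiv.Perm.ofSubtype d * Equiv.swap e a) x = _
    rw [Perm.mul_apply, Equiv.swap_apply_of_ne_of_ne hx.1 hx.2,
      Equiv.Perm.ofSubtype_apply_of_mem d hx]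

private lemma cardL2 {e a b : α} (hea : e ≠ a) (heb : e ≠ b) (hab : a ≠ b) :
    Fintype.card {σ : Perm α // (∀ x, σ x ≠ x) ∧ σ e = a ∧ σ b = e}
      = numDerangements (Fintype.card α - 2) + numDerangements (Fintype.card α - 3) := by
  classical
  have ha' : a ≠ e ∧ a ≠ b := ⟨hea.symm, hab⟩
  set a' : {x : α // x ≠ e ∧ x ≠ b} := ⟨a, ha'⟩ with ha'def
  have hstep1 : Fintype.card {σ : Perm α // (∀ x, σ x ≠ x) ∧ σ e = a ∧ σ b = e}
      = Fintype.card {θ : Perm {x : α // x ≠ e ∧ x ≠ b} // Function.fixedPoints θ ⊆ {a'}} := by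
    refine Fintype.card_congr ?_
    have keyiff : ∀ (σ : Perm α), (∀ x, σ x ≠ x) → σ e = a → σ b = e →
        ∀ x : α, (x ≠ e ∧ x ≠ b) ↔
          ((Equiv.swap a b * σ) x ≠ e ∧ (Equiv.swap a b * σ) x ≠ b) := by
      intro σ hd h1 h2 x
      have hgb : (Equiv.swap a b * σ) b = e := by
        rw [Perm.mul_apply, h2]
        exact Equiv.swap_apply_of_ne_of_ne hea heb
      have hge : (Equiv.swap a b * σ) e = b := by
        rw [Perm.mul_apply, h1, Equiv.swap_apply_left]
      have k1 : (Equiv.swap a b * σ) x = e ↔ x = b :=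
        ⟨fun h => (Equiv.swap a b * σ).injective (h.trans hgb.symm),
          fun h => by rw [h, hgb]⟩
      have k2 : (Equiv.swap a b * σ) x = b ↔ x = e :=
        ⟨fun h => (Equiv.swap a b * σ).injective (h.trans hge.symm),
          fun h => by rw [h, hge]⟩
      constructor
      · rintro ⟨h1', h2'⟩; exact ⟨fun h => h2' (k1.mp h), fun h => h1' (k2.mp h)⟩
      · rintro ⟨h1', h2'⟩; exact ⟨fun h => h2' (k2.mpr h), fun h => h1' (k1.mpr h)⟩
    refine
      { toFun := fun σp =>
          ⟨(Equiv.swap a b * σp.1).subtypePerm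
              (fun x => (keyiff σp.1 σp.2.1 σp.2.2.1 σp.2.2.2 x).symm), ?_⟩
        invFun := fun θp =>
          ⟨Equiv.swap a b * Equiv.Perm.ofSubtype θp.1 * Equiv.swap e b, ?_, ?_, ?_⟩
        left_inv := ?_
        right_inv := ?_ }
    · -- fixedPoints ⊆ {a'}
      rintro ⟨x, hx⟩ hfix
      have hfix' : Equiv.swap a b (σp.1 x) = x := congrArg Subtype.val hfix
      by_contra hxa
      have hxa' : x ≠ a := by
        intro h; exact hxa (by simp only [Set.mem_singleton_iff]; exact Subtype.ext h)
      have : σp.1 x = x := by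
        have h3 := congrArg (Equiv.swap a b) hfix'
        rwa [Equiv.swap_apply_self, Equiv.swap_apply_of_ne_of_ne hxa' hx.2] at h3
      exact σp.2.1 x this
    · -- derangement property of inverse image
      intro x
      by_cases hxe : x = e
      · rw [hxe, Perm.mul_apply, Perm.mul_apply, Equiv.swap_apply_left,
          Equiv.Perm.ofSubtype_apply_of_not_mem θp.1 (by simp),
          Equiv.swap_apply_right]
        exact hea.symm
      by_cases hxb : x = b
      · rw [hxb, Perm.mul_apply, Perm.mul_apply, Equiv.swap_apply_right,
          Equiv.Perm.ofSubtype_apply_of_not_mem θp.1 (by simp),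
          Equiv.swap_apply_of_ne_of_ne hea heb]
        exact heb
      · rw [Perm.mul_apply, Perm.mul_apply,
          Equiv.swap_apply_of_ne_of_ne hxe hxb,
          Equiv.Perm.ofSubtype_apply_of_mem θp.1 ⟨hxe, hxb⟩]
        by_cases hxa : x = a
        · intro h
          have h3 := congrArg (Equiv.swap a b) h
          rw [Equiv.swap_apply_self] at h3
          exact (θp.1 ⟨x, hxe, hxb⟩).2.2
            (h3.trans (by rw [hxa, Equiv.swap_apply_left]))
        · intro h
          have h3 := congrArg (Equiv.swap a b) h
          rw [Equiv.swap_apply_self, Equiv.swap_apply_of_ne_of_ne hxa hxb] at h3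
          have hmem : (⟨x, hxe, hxb⟩ : {x : α // x ≠ e ∧ x ≠ b}) ∈ Function.fixedPoints θp.1 :=
            Subtype.ext h3
          exact hxa (congrArg Subtype.val (θp.2 hmem))
    · -- σ' e = a
      rw [Perm.mul_apply, Perm.mul_apply, Equiv.swap_apply_left,
        Equiv.Perm.ofSubtype_apply_of_not_mem θp.1 (by simp), Equiv.swap_apply_right]
    · -- σ' b = e
      rw [Perm.mul_apply, Perm.mul_apply, Equiv.swap_apply_right,
        Equiv.Perm.ofSubtype_apply_of_not_mem θp.1 (by simp),
        Equiv.swap_apply_of_ne_of_ne hea heb]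
    · -- left inverse
      rintro ⟨σ, hd, h1, h2⟩
      apply Subtype.ext
      apply Equiv.ext
      intro x
      show Equiv.swap a b (Equiv.Perm.ofSubtype _ (Equiv.swap e b x)) = σ x
      by_cases hxe : x = e
      · rw [hxe, Equiv.swap_apply_left,
          Equiv.Perm.ofSubtype_apply_of_not_mem _ (by simp),
          Equiv.swap_apply_right, h1]
      by_cases hxb : x = b
      · rw [hxb, Equiv.swap_apply_right,
          Equiv.Perm.ofSubtype_apply_of_not_mem _ (by simp),
          Equiv.swap_apply_of_ne_of_ne hea heb, h2]
      · rw [Equiv.swap_apply_of_ne_of_ne hxe hxb,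
          Equiv.Perm.ofSubtype_apply_of_mem _ ⟨hxe, hxb⟩]
        show Equiv.swap a b (Equiv.swap a b (σ x)) = σ x
        rw [Equiv.swap_apply_self]
    · -- right inverse
      rintro ⟨θ, hθ⟩
      apply Subtype.ext
      apply Equiv.ext
      rintro ⟨x, hx⟩
      apply Subtype.ext
      show (Equiv.swap a b * (Equiv.swap a b * Equiv.Perm.ofSubtype θ * Equiv.swap e b)) x
          = (θ ⟨x, hx⟩ : α)
      rw [Perm.mul_apply, Perm.mul_apply, Perm.mul_apply,
        Equiv.swap_apply_of_ne_of_ne hx.1 hx.2, Equiv.swap_apply_self,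
        Equiv.Perm.ofSubtype_apply_of_mem θ hx]
  rw [hstep1]
  have hcS : Fintype.card {x : α // x ≠ e ∧ x ≠ b} = Fintype.card α - 2 :=
    card_subtype_ne_ne heb
  have h2 := Fintype.card_congr (derangements.atMostOneFixedPointEquivSum_derangements a')
  rw [Fintype.card_sum] at h2
  rw [h2, card_derangements_eq_numDerangements, card_derangements_eq_numDerangements,
    Fintype.card_compl_set, Set.card_singleton, hcS]
  rw [add_comm, show Fintype.card α - 2 - 1 = Fintype.card α - 3 from by omega]

end AuxCards

/-- if `G` is cyclic of order `n ≥ 2`, the permanent of the adjacency matrix of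
`P_s(G)` equals
`(n - φ(n) - 1) Σ_{r=1}^{n-1} (-1)^{r-1} (n-1-r)! (C(n-2, r-1) + (n-2-φ(n)) C(n-3, r-1))`. -/
theorem strongPowerGraph_permanent_adjMatrix (G : Type*) [Group G] [Fintype G]
    [DecidableEq G] (hG : IsCyclic G) (n : ℕ) (hcard : Fintype.card G = n) (hn : 2 ≤ n) :
    ((strongPowerGraph G).adjMatrix ℤ).permanent =
      ((n : ℤ) - Nat.totient n - 1) *
        ∑ r ∈ Icc 1 (n - 1), (-1 : ℤ) ^ (r - 1) * (Nat.factorial (n - 1 - r) : ℤ) *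
          ((Nat.choose (n - 2) (r - 1) : ℤ) +
            ((n : ℤ) - 2 - Nat.totient n) * (Nat.choose (n - 3) (r - 1) : ℤ)) := by
  classical
  haveI := hG
  obtain ⟨m, rfl⟩ : ∃ m, n = m + 2 := ⟨n - 2, by omega⟩
  -- basic facts
  have htot : Nat.totient (m + 2) < m + 2 := Nat.totient_lt _ (by omega)
  obtain ⟨g, hg⟩ := hG.exists_generator
  have hog : orderOf g = m + 2 := by
    rw [orderOf_eq_card_of_forall_mem_zpowers hg, Nat.card_eq_fintype_card, hcard]
  -- every non-identity element is a positive power of `g` with small exponent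
  have hexp : ∀ x : G, x ≠ 1 → ∃ i : ℕ, 0 < i ∧ i < m + 2 ∧ g ^ i = x := by
    intro x hx
    obtain ⟨k, hk⟩ := Subgroup.mem_zpowers_iff.mp (hg x)
    have hpos : (0 : ℤ) < ((m : ℤ) + 2) := by positivity
    have hmod_nonneg : 0 ≤ k % ((m : ℤ) + 2) := Int.emod_nonneg k (by omega)
    have hmod_lt : k % ((m : ℤ) + 2) < (m : ℤ) + 2 := Int.emod_lt_of_pos k hpos
    refine ⟨(k % ((m : ℤ) + 2)).toNat, ?_, by omega, ?_⟩
    · rcases Nat.eq_zero_or_pos (k % ((m : ℤ) + 2)).toNat with h | h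
      swap
      · exact h
      · exfalso
        apply hx
        have hzero : k % ((m : ℤ) + 2) = 0 := by omega
        have : g ^ (k % ((m : ℤ) + 2)) = x := by
          have horder : ((orderOf g : ℤ)) = (m : ℤ) + 2 := by rw [hog]; push_cast; ring
          rw [← horder, zpow_mod_orderOf, hk]
        rw [hzero] at this
        simpa using this.symm
    · have horder : ((orderOf g : ℤ)) = (m : ℤ) + 2 := by rw [hog]; push_cast; ring
      have : g ^ (((k % ((m : ℤ) + 2)).toNat : ℤ)) = x := by
        rw [Int.toNat_of_nonneg hmod_nonneg, ← horder, zpow_mod_orderOf, hk]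
      rw [← zpow_natCast]
      exact this
  -- characterization of adjacency
  have hAdj : ∀ x y : G, (strongPowerGraph G).Adj x y ↔
      (x ≠ y ∧ (x = 1 → orderOf y ≠ m + 2) ∧ (y = 1 → orderOf x ≠ m + 2)) := by
    intro x y
    constructor
    · rintro ⟨hxy, m₁, m₂, hm₁, hm₁n, hm₂, hm₂n, heq⟩
      rw [hcard] at hm₁n hm₂n
      refine ⟨hxy, ?_, ?_⟩
      · rintro rfl hy
        have : y ^ m₂ = 1 := by rw [← heq, one_pow]
        have hdvd := orderOf_dvd_of_pow_eq_one this
        rw [hy] at hdvd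
        have := Nat.le_of_dvd hm₂ hdvd
        omega
      · rintro rfl hx
        have : x ^ m₁ = 1 := by rw [heq, one_pow]
        have hdvd := orderOf_dvd_of_pow_eq_one this
        rw [hx] at hdvd
        have := Nat.le_of_dvd hm₁ hdvd
        omega
    · rintro ⟨hxy, h1, h2⟩
      refine ⟨hxy, ?_⟩
      rcases eq_or_ne x 1 with rfl | hx1
      · have hy1 : y ≠ 1 := fun h => hxy h.symm
        have hyo : orderOf y < m + 2 := by
          have hdvd : orderOf y ∣ m + 2 := hcard ▸ orderOf_dvd_card
          have := Nat.le_of_dvd (by omega) hdvd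
          have := h1 rfl
          omega
        exact ⟨1, orderOf y, by omega, by rw [hcard]; omega,
          orderOf_pos y, by rw [hcard]; omega, by rw [one_pow, pow_orderOf_eq_one]⟩
      rcases eq_or_ne y 1 with rfl | hy1
      · have hxo : orderOf x < m + 2 := by
          have hdvd : orderOf x ∣ m + 2 := hcard ▸ orderOf_dvd_card
          have := Nat.le_of_dvd (by omega) hdvd
          have := h2 rfl
          omega
        exact ⟨orderOf x, 1, orderOf_pos x, by rw [hcard]; omega,
          by omega, by rw [hcard]; omega, by rw [one_pow, pow_orderOf_eq_one]⟩
      · obtain ⟨i, hi0, hin, hgi⟩ := hexp x hx1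
        obtain ⟨j, hj0, hjn, hgj⟩ := hexp y hy1
        refine ⟨j, i, hj0, by rw [hcard]; omega, hi0, by rw [hcard]; omega, ?_⟩
        rw [← hgi, ← hgj, ← pow_mul, ← pow_mul, Nat.mul_comm]
  -- the set of non-identity non-generators
  set S : Finset G := univ.filter (fun x => x ≠ 1 ∧ orderOf x ≠ m + 2) with hSdef
  have hScard : S.card = (m + 2) - 1 - Nat.totient (m + 2) := by
    have hgenset : (univ.filter fun x : G => orderOf x = m + 2).card = Nat.totient (m + 2) :=
      IsCyclic.card_orderOf_eq_totient (by rw [hcard])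
    have hsub : (univ.filter fun x : G => orderOf x = m + 2)
        ⊆ (univ.filter fun x : G => x ≠ 1) := by
      intro x hx
      simp only [mem_filter, mem_univ, true_and] at hx ⊢
      intro h1
      rw [h1, orderOf_one] at hx
      omega
    have hne1 : (univ.filter fun x : G => x ≠ 1).card = (m + 2) - 1 := by
      rw [Finset.filter_ne', Finset.card_erase_of_mem (mem_univ 1), Finset.card_univ, hcard]
    have hSd : S = (univ.filter fun x : G => x ≠ 1)
        \ (univ.filter fun x : G => orderOf x = m + 2) := by
      ext x
      simp only [hSdef, mem_filter, mem_univ, true_and, mem_sdiff]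
      try tauto
    rw [hSd, Finset.card_sdiff_of_subset hsub, hne1, hgenset]
  -- the permanent counts admissible permutations
  have hper : ((strongPowerGraph G).adjMatrix ℤ).permanent
      = (((univ.filter fun σ : Equiv.Perm G =>
          ∀ i, (strongPowerGraph G).Adj (σ i) i).card : ℕ) : ℤ) := by
    have h1 : ∀ σ : Equiv.Perm G, (∏ i, (strongPowerGraph G).adjMatrix ℤ (σ i) i)
        = if (∀ i, (strongPowerGraph G).Adj (σ i) i) then (1:ℤ) else 0 := by
      intro σ
      simp only [SimpleGraph.adjMatrix_apply]
      exact Fintype.prod_boole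
    unfold Matrix.permanent
    rw [Finset.sum_congr rfl fun σ _ => h1 σ, Finset.sum_boole]
  -- cardinality of each fiber
  have hfiber : ∀ a b : G, a ∈ S → b ∈ S →
      (univ.filter fun σ : Equiv.Perm G =>
          (∀ i, (strongPowerGraph G).Adj (σ i) i) ∧ (σ 1, σ⁻¹ 1) = (a, b)).card
        = if a = b then numDerangements m else numDerangements m + numDerangements (m - 1) := by
    intro a b ha hb
    rw [hSdef, mem_filter] at ha hb
    obtain ⟨-, ha1, haN⟩ := ha
    obtain ⟨-, hb1, hbN⟩ := hb
    have hset : (univ.filter fun σ : Equiv.Perm G =>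
        (∀ i, (strongPowerGraph G).Adj (σ i) i) ∧ (σ 1, σ⁻¹ 1) = (a, b))
        = univ.filter fun σ : Equiv.Perm G => (∀ x, σ x ≠ x) ∧ σ 1 = a ∧ σ b = 1 := by
      ext σ
      simp only [mem_filter, mem_univ, true_and, Prod.mk.injEq]
      constructor
      · rintro ⟨hP, h1, h2⟩
        refine ⟨fun x => ((hAdj _ _).1 (hP x)).1, h1, ?_⟩
        rw [Equiv.Perm.inv_eq_iff_eq] at h2
        exact h2.symm
      · rintro ⟨hd, h1, hb1⟩
        refine ⟨fun i => (hAdj _ _).2 ⟨hd i, ?_, ?_⟩, h1, ?_⟩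
        · intro hi1
          have hib : i = b := by
            apply σ.injective
            rw [hi1, hb1]
          rw [hib]
          exact hbN
        · rintro rfl
          rw [h1]; exact haN
        · rw [Equiv.Perm.inv_eq_iff_eq]
          exact hb1.symm
    rw [hset]
    by_cases hab : a = b
    · subst hab
      rw [if_pos rfl]
      have hc := cardL1 (α := G) (e := (1 : G)) (a := a) (Ne.symm ha1)
      rw [hcard, show m + 2 - 2 = m from rfl] at hc
      rw [← Fintype.card_subtype]
      exact hc
    · rw [if_neg hab]
      have hc := cardL2 (α := G) (e := (1 : G)) (a := a) (b := b) (Ne.symm ha1) (Ne.symm hb1) hab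
      rw [hcard, show m + 2 - 2 = m from rfl, show m + 2 - 3 = m - 1 from rfl] at hc
      rw [← Fintype.card_subtype]
      exact hc
  -- the total count
  have hcount : (((univ.filter fun σ : Equiv.Perm G =>
        ∀ i, (strongPowerGraph G).Adj (σ i) i).card : ℕ) : ℤ)
      = (S.card : ℤ) * ((S.card : ℤ) * ((numDerangements m : ℤ) + (numDerangements (m-1) : ℤ))
          - (numDerangements (m-1) : ℤ)) := by
    have hmaps : ∀ σ ∈ (univ.filter fun σ : Equiv.Perm G =>
        ∀ i, (strongPowerGraph G).Adj (σ i) i), (σ 1, σ⁻¹ 1) ∈ S ×ˢ S := by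
      intro σ hσ
      rw [mem_filter] at hσ
      have hP := hσ.2
      have h1 := (hAdj _ _).1 (hP 1)
      have h2 := (hAdj _ _).1 (hP (σ⁻¹ 1))
      rw [show σ (σ⁻¹ 1) = 1 from σ.apply_symm_apply 1] at h2
      rw [Finset.mem_product, hSdef, mem_filter, mem_filter]
      exact ⟨⟨mem_univ _, h1.1, h1.2.2 rfl⟩,
        mem_univ _, fun h => h2.1 h.symm, h2.2.1 rfl⟩
    rw [Finset.card_eq_sum_card_fiberwise hmaps]
    push_cast
    rw [Finset.sum_product]
    have hstep : ∀ a ∈ S, ∀ b ∈ S,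
        ((((univ.filter fun σ : Equiv.Perm G =>
            ∀ i, (strongPowerGraph G).Adj (σ i) i).filter
              fun σ => (σ 1, σ⁻¹ 1) = (a, b)).card : ℕ) : ℤ)
          = ((numDerangements m : ℤ) + (numDerangements (m-1) : ℤ))
              - (if a = b then (numDerangements (m-1) : ℤ) else 0) := by
      intro a ha b hb
      rw [Finset.filter_filter, hfiber a b ha hb]
      split_ifs <;> push_cast <;> ring
    have houter : ∀ a ∈ S,
        (∑ b ∈ S, ((((univ.filter fun σ : Equiv.Perm G =>
            ∀ i, (strongPowerGraph G).Adj (σ i) i).filter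
              fun σ => (σ 1, σ⁻¹ 1) = (a, b)).card : ℕ) : ℤ))
          = (S.card : ℤ) * ((numDerangements m : ℤ) + (numDerangements (m-1) : ℤ))
              - (numDerangements (m-1) : ℤ) := by
      intro a ha
      rw [Finset.sum_congr rfl (hstep a ha), Finset.sum_sub_distrib, Finset.sum_const,
        Finset.sum_ite_eq S a (fun _ => (numDerangements (m-1) : ℤ)), if_pos ha,
        nsmul_eq_mul]
    rw [Finset.sum_congr rfl houter, Finset.sum_const, nsmul_eq_mul]
  -- cast of the cardinality of S
  have htotcast : ((S.card : ℕ) : ℤ) = ((m + 2 : ℕ) : ℤ) - (Nat.totient (m + 2) : ℤ) - 1 := by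
    rw [hScard]
    omega
  rw [hper, hcount, htotcast]
  rcases Nat.eq_zero_or_pos m with hm | hm
  · subst hm
    have hK : ((0 + 2 : ℕ) : ℤ) - (Nat.totient (0 + 2) : ℤ) - 1 = 0 := by
      norm_num [Nat.totient_two]
    rw [hK]
    simp only [zero_mul]
  · obtain ⟨t, rfl⟩ : ∃ t, m = t + 1 := ⟨m - 1, by omega⟩
    simp only [show (t + 1) - 1 = t from rfl, show t + 1 + 2 - 1 = t + 2 from rfl,
      show t + 1 + 2 - 2 = t + 1 from rfl, show t + 1 + 2 - 3 = t from rfl]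
    rw [rhsSum t (((t + 1 + 2 : ℕ) : ℤ) - 2 - (Nat.totient (t + 1 + 2) : ℤ))]
    ring
end

section
/- If G is a finite non-cyclic group of order n, then the permanent of the Laplacian matrix of the strong power graph P_s(G) equals (-1)^n · n! · Σ_{k=0}^{n} (-1)^k n^k / k!. -/
open Finset

lemma spg_adj_iff_s19 {G : Type*} [Group G] [Fintype G] (hG : ¬ IsCyclic G) (a b : G) :
    (strongPowerGraph G).Adj a b ↔ a ≠ b := by
  constructor
  · exact fun h => h.1
  · intro hab
    have hlt : ∀ x : G, orderOf x < Fintype.card G := by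
      intro x
      refine lt_of_le_of_ne orderOf_le_card_univ fun h => hG ?_
      exact isCyclic_of_orderOf_eq_card x (by rwa [Nat.card_eq_fintype_card])
    exact ⟨hab, orderOf a, orderOf b, orderOf_pos a, hlt a, orderOf_pos b, hlt b,
      by rw [pow_orderOf_eq_one, pow_orderOf_eq_one]⟩

lemma spg_lap_apply {G : Type*} [Group G] [Fintype G] [DecidableEq G] (hG : ¬ IsCyclic G)
    (i j : G) : (strongPowerGraph G).lapMatrix ℚ i j =
      (if i = j then (Fintype.card G : ℚ) else 0) + (-1) := by
  have hdeg : (strongPowerGraph G).degree i = Fintype.card G - 1 := by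
    have : (strongPowerGraph G).neighborFinset i = univ.erase i := by
      ext x
      simp [SimpleGraph.mem_neighborFinset, spg_adj_iff_s19 hG, ne_comm, eq_comm]
    rw [SimpleGraph.degree, this, card_erase_of_mem (mem_univ i), card_univ]
  have hpos : 1 ≤ Fintype.card G := Fintype.card_pos
  by_cases h : i = j
  · subst h
    simp only [SimpleGraph.lapMatrix, SimpleGraph.degMatrix, SimpleGraph.adjMatrix,
      Matrix.sub_apply, Matrix.diagonal_apply_eq, Matrix.of_apply, hdeg, if_pos rfl,
      SimpleGraph.irrefl, if_false]
    rw [Nat.cast_sub hpos]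
    simp only [if_true, Nat.cast_one, sub_zero]
    exact sub_eq_add_neg _ 1
  · have hadj : (strongPowerGraph G).Adj i j := (spg_adj_iff_s19 hG i j).2 h
    simp only [SimpleGraph.lapMatrix, SimpleGraph.degMatrix, SimpleGraph.adjMatrix,
      Matrix.sub_apply, Matrix.diagonal_apply_ne _ h, Matrix.of_apply, if_pos hadj, if_neg h]
    ring

/-- if `G` is non-cyclic of order `n`, the permanent of the Laplacian matrix of
`P_s(G)` equals `(-1)^n · n! · Σ_{k=0}^{n} (-1)^k n^k / k!`. -/
theorem strongPowerGraph_permanent_lapMatrix_noncyclic (G : Type*) [Group G] [Fintype G]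
    [DecidableEq G] (hG : ¬ IsCyclic G) (n : ℕ) (hcard : Fintype.card G = n) :
    ((strongPowerGraph G).lapMatrix ℚ).permanent =
      (-1 : ℚ) ^ n * (Nat.factorial n : ℚ) *
        ∑ k ∈ range (n + 1), (-1 : ℚ) ^ k * (n : ℚ) ^ k / (Nat.factorial k : ℚ) := by
  rw [Matrix.permanent]
  have step1 : ∀ σ : Equiv.Perm G, (∏ i, (strongPowerGraph G).lapMatrix ℚ (σ i) i)
      = ∑ t ∈ (univ : Finset G).powerset,
        (∏ i ∈ t, (if σ i = i then (n : ℚ) else 0)) * (-1) ^ (n - t.card) := by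
    intro σ
    have h0 : ∀ i : G, (strongPowerGraph G).lapMatrix ℚ (σ i) i
        = (if σ i = i then (n : ℚ) else 0) + (-1) := by
      intro i; rw [spg_lap_apply hG, hcard]
    simp_rw [h0]
    rw [Finset.prod_add]
    refine Finset.sum_congr rfl fun t ht => ?_
    rw [Finset.prod_const]
    congr 1
    rw [card_sdiff_of_subset (mem_powerset.1 ht), card_univ, hcard]
  simp_rw [step1]
  rw [Finset.sum_comm]
  have step2 : ∀ t ∈ (univ : Finset G).powerset,
      (∑ σ : Equiv.Perm G, (∏ i ∈ t, (if σ i = i then (n : ℚ) else 0)) * (-1) ^ (n - t.card))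
      = (n : ℚ) ^ t.card * (-1) ^ (n - t.card) * (Nat.factorial (n - t.card) : ℚ) := by
    intro t _
    have hprod : ∀ σ : Equiv.Perm G, (∏ i ∈ t, (if σ i = i then (n : ℚ) else 0))
        = if (∀ i ∈ t, σ i = i) then (n : ℚ) ^ t.card else 0 := by
      intro σ
      by_cases h : ∀ i ∈ t, σ i = i
      · rw [if_pos h, Finset.prod_congr rfl fun i hi => if_pos (h i hi), Finset.prod_const]
      · obtain ⟨i, hi, hne⟩ := by push_neg at h; exact h
        rw [if_neg (by push_neg; exact ⟨i, hi, hne⟩)]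
        exact Finset.prod_eq_zero hi (if_neg hne)
    simp_rw [hprod, ite_mul, zero_mul]
    rw [Finset.sum_ite, Finset.sum_const, Finset.sum_const_zero, add_zero, nsmul_eq_mul]
    have hcardfix : (univ.filter (fun σ : Equiv.Perm G => ∀ i ∈ t, σ i = i)).card
        = Nat.factorial (n - t.card) := by
      rw [← Fintype.card_subtype]
      have e1 : {σ : Equiv.Perm G // ∀ i ∈ t, σ i = i} ≃ Equiv.Perm {x : G // x ∉ t} := by
        refine (Equiv.subtypeEquiv (Equiv.refl _) fun σ => ?_).trans
          (Equiv.Perm.subtypeEquivSubtypePerm (fun x => x ∉ t)).symm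
        simp [not_not]
      rw [Fintype.card_congr e1, Fintype.card_perm]
      congr 1
      rw [Fintype.card_subtype_compl, Fintype.card_coe, hcard]
    rw [hcardfix]
    ring
  rw [Finset.sum_congr rfl step2, Finset.sum_powerset]
  have step3 : ∀ j ∈ range (#(univ : Finset G) + 1),
      (∑ t ∈ powersetCard j (univ : Finset G),
        (n : ℚ) ^ t.card * (-1) ^ (n - t.card) * (Nat.factorial (n - t.card) : ℚ))
      = (n.choose j : ℚ) * ((n : ℚ) ^ j * (-1) ^ (n - j) * (Nat.factorial (n - j) : ℚ)) := by
    intro j _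
    rw [Finset.sum_congr rfl fun t ht => by
      rw [(Finset.mem_powersetCard.1 ht).2]]
    rw [Finset.sum_const, Finset.card_powersetCard, card_univ, hcard, nsmul_eq_mul]
  rw [Finset.sum_congr rfl step3, card_univ, hcard, Finset.mul_sum]
  refine Finset.sum_congr rfl fun j hj => ?_
  have hjn : j ≤ n := Nat.lt_succ_iff.1 (Finset.mem_range.1 hj)
  have key : ((n.choose j : ℚ)) * (Nat.factorial j : ℚ) * (Nat.factorial (n - j) : ℚ)
      = (Nat.factorial n : ℚ) := by
    exact_mod_cast congrArg (Nat.cast : ℕ → ℚ) (Nat.choose_mul_factorial_mul_factorial hjn)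
  have h1 : ((-1:ℚ)) ^ (n - j) * (-1:ℚ) ^ j = (-1:ℚ) ^ n := by
    rw [← pow_add, Nat.sub_add_cancel hjn]
  have hj' : (Nat.factorial j : ℚ) ≠ 0 := Nat.cast_ne_zero.2 (Nat.factorial_ne_zero j)
  have hx : (-1:ℚ) ^ (n - j) = (-1:ℚ) ^ n * (-1:ℚ) ^ j := by
    have h2 : (-1:ℚ) ^ j * (-1:ℚ) ^ j = 1 := by rw [← mul_pow]; norm_num
    calc (-1:ℚ) ^ (n - j) = ((-1:ℚ) ^ (n-j) * (-1:ℚ)^j) * (-1:ℚ)^j := by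
          rw [mul_assoc, h2, mul_one]
      _ = (-1:ℚ) ^ n * (-1:ℚ) ^ j := by rw [h1]
  rw [hx, mul_div_assoc]
  field_simp
  linear_combination ((n:ℚ) ^ j) * key
end
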